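/- arXiv:1003.0318 — 5 statements merged into one kernel-verified Lean document; each statement's English description precedes it below -/
import Mathlib

section
/- Let k be a field and f, g : C → D two morphisms of k-coalgebras. Set S := {c ∈ C | f(c) = g(c)} and let E be the sum of all subcoalgebras of C contained in S. Then the pair (E, i), where i : E → C is the canonical inclusion, is an equalizer of f and g in the category of k-coalgebras: f ∘ i = g ∘ i, and for every k-coalgebra E' and coalgebra map h : E' → C with f ∘ h = g ∘ h there is a unique coalgebra map h' : E' → E with i ∘ h' = h. -/
universe u v w

/-- `V` is a subcoalgebra of the coalgebra `C`: the comultiplication maps `V` into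
the image of `V ⊗ V` in `C ⊗ C`. -/
def IsSubcoalgebra {k : Type u} [CommRing k] {C : Type v} [AddCommGroup C] [Module k C]
    [Coalgebra k C] (V : Submodule k C) : Prop :=
  ∀ v ∈ V, Coalgebra.comul (R := k) v ∈
    LinearMap.range (TensorProduct.map V.subtype V.subtype)

open TensorProduct Coalgebra

section Aux

variable {k : Type u} [Field k]

lemma tmap_injective {M N M' N' : Type*} [AddCommGroup M] [Module k M]
    [AddCommGroup N] [Module k N] [AddCommGroup M'] [Module k M']
    [AddCommGroup N'] [Module k N'] {f : M →ₗ[k] M'} {g : N →ₗ[k] N'}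
    (hf : Function.Injective f) (hg : Function.Injective g) :
    Function.Injective (TensorProduct.map f g) := by
  rw [← LinearMap.rTensor_comp_lTensor]
  exact (Module.Flat.rTensor_preserves_injective_linearMap f hf).comp
    (Module.Flat.lTensor_preserves_injective_linearMap g hg)

variable {C : Type v} [AddCommGroup C] [Module k C] [Coalgebra k C]

lemma subtype_tmap_injective (V : Submodule k C) :
    Function.Injective (TensorProduct.map V.subtype V.subtype) :=
  tmap_injective V.injective_subtype V.injective_subtype

/-- The comultiplication of a subcoalgebra. -/
noncomputable def subComul (V : Submodule k C) (hV : IsSubcoalgebra V) :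
    ↥V →ₗ[k] ↥V ⊗[k] ↥V :=
  ((LinearEquiv.ofInjective (TensorProduct.map V.subtype V.subtype)
    (subtype_tmap_injective V)).symm.toLinearMap).comp
    (LinearMap.codRestrict _ ((Coalgebra.comul (R := k)) ∘ₗ V.subtype)
      (fun v => hV v v.2))

lemma map_subComul (V : Submodule k C) (hV : IsSubcoalgebra V) :
    (TensorProduct.map V.subtype V.subtype) ∘ₗ subComul V hV =
      (Coalgebra.comul (R := k)) ∘ₗ V.subtype := by
  ext v
  simp only [subComul, LinearMap.coe_comp, Function.comp_apply, LinearEquiv.coe_coe]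
  have h := (LinearEquiv.ofInjective (TensorProduct.map V.subtype V.subtype)
    (subtype_tmap_injective V)).apply_symm_apply
      (LinearMap.codRestrict _ ((Coalgebra.comul (R := k)) ∘ₗ V.subtype)
        (fun v => hV v v.2) v)
  have h2 := congrArg Subtype.val h
  simp only [LinearEquiv.ofInjective_apply] at h2
  exact h2

lemma map_subComul_apply (V : Submodule k C) (hV : IsSubcoalgebra V) (v : ↥V) :
    (TensorProduct.map V.subtype V.subtype) (subComul V hV v) =
      (Coalgebra.comul (R := k)) (v : C) :=
  LinearMap.congr_fun (map_subComul V hV) v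

/-- The coalgebra structure on a subcoalgebra. -/
noncomputable def subCoalgebra (V : Submodule k C) (hV : IsSubcoalgebra V) :
    Coalgebra k ↥V where
  comul := subComul V hV
  counit := (Coalgebra.counit (R := k)) ∘ₗ V.subtype
  coassoc := by
    apply LinearMap.ext
    intro v
    apply tmap_injective (f := V.subtype)
      (g := TensorProduct.map V.subtype V.subtype) V.injective_subtype
      (subtype_tmap_injective V)
    have nat : TensorProduct.map V.subtype (TensorProduct.map V.subtype V.subtype) ∘ₗ
        (TensorProduct.assoc k ↥V ↥V ↥V).toLinearMap =
        (TensorProduct.assoc k C C C).toLinearMap ∘ₗ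
          TensorProduct.map (TensorProduct.map V.subtype V.subtype) V.subtype := by
      ext x y z; rfl
    have e1 : TensorProduct.map (TensorProduct.map V.subtype V.subtype) V.subtype
        ((subComul V hV).rTensor ↥V (subComul V hV v)) =
        (Coalgebra.comul (R := k)).rTensor C
          (TensorProduct.map V.subtype V.subtype (subComul V hV v)) := by
      have : TensorProduct.map (TensorProduct.map V.subtype V.subtype) V.subtype ∘ₗ
          (subComul V hV).rTensor ↥V =
          (Coalgebra.comul (R := k)).rTensor C ∘ₗ TensorProduct.map V.subtype V.subtype := by
        simp only [LinearMap.rTensor, ← TensorProduct.map_comp, map_subComul V hV,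
          LinearMap.comp_id, LinearMap.id_comp]
      exact LinearMap.congr_fun this _
    have e2 : TensorProduct.map V.subtype (TensorProduct.map V.subtype V.subtype)
        ((subComul V hV).lTensor ↥V (subComul V hV v)) =
        (Coalgebra.comul (R := k)).lTensor C
          (TensorProduct.map V.subtype V.subtype (subComul V hV v)) := by
      have : TensorProduct.map V.subtype (TensorProduct.map V.subtype V.subtype) ∘ₗ
          (subComul V hV).lTensor ↥V =
          (Coalgebra.comul (R := k)).lTensor C ∘ₗ TensorProduct.map V.subtype V.subtype := by
        simp only [LinearMap.lTensor, ← TensorProduct.map_comp, map_subComul V hV,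
          LinearMap.comp_id, LinearMap.id_comp]
      exact LinearMap.congr_fun this _
    simp only [LinearMap.coe_comp, Function.comp_apply, LinearEquiv.coe_coe]
    rw [show TensorProduct.map V.subtype (TensorProduct.map V.subtype V.subtype)
        ((TensorProduct.assoc k ↥V ↥V ↥V) ((subComul V hV).rTensor ↥V (subComul V hV v))) =
        (TensorProduct.assoc k C C C)
          (TensorProduct.map (TensorProduct.map V.subtype V.subtype) V.subtype
            ((subComul V hV).rTensor ↥V (subComul V hV v))) from
        LinearMap.congr_fun nat _]
    rw [e1, e2, map_subComul_apply]
    exact Coalgebra.coassoc_apply _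
  rTensor_counit_comp_comul := by
    apply LinearMap.ext
    intro v
    apply Module.Flat.lTensor_preserves_injective_linearMap (M := k) V.subtype
      V.injective_subtype
    have e1 : V.subtype.lTensor k
        ((((Coalgebra.counit (R := k)) ∘ₗ V.subtype).rTensor ↥V) (subComul V hV v)) =
        (Coalgebra.counit (R := k)).rTensor C
          (TensorProduct.map V.subtype V.subtype (subComul V hV v)) := by
      have : V.subtype.lTensor k ∘ₗ ((Coalgebra.counit (R := k)) ∘ₗ V.subtype).rTensor ↥V =
          (Coalgebra.counit (R := k)).rTensor C ∘ₗ TensorProduct.map V.subtype V.subtype := by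
        simp only [LinearMap.lTensor, LinearMap.rTensor, ← TensorProduct.map_comp,
          LinearMap.comp_id, LinearMap.id_comp]
      exact LinearMap.congr_fun this _
    simp only [LinearMap.coe_comp, Function.comp_apply]
    rw [e1, map_subComul_apply]
    simp [TensorProduct.mk_apply]
  lTensor_counit_comp_comul := by
    apply LinearMap.ext
    intro v
    apply Module.Flat.rTensor_preserves_injective_linearMap (M := k) V.subtype
      V.injective_subtype
    have e1 : V.subtype.rTensor k
        ((((Coalgebra.counit (R := k)) ∘ₗ V.subtype).lTensor ↥V) (subComul V hV v)) =
        (Coalgebra.counit (R := k)).lTensor C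
          (TensorProduct.map V.subtype V.subtype (subComul V hV v)) := by
      have : V.subtype.rTensor k ∘ₗ ((Coalgebra.counit (R := k)) ∘ₗ V.subtype).lTensor ↥V =
          (Coalgebra.counit (R := k)).lTensor C ∘ₗ TensorProduct.map V.subtype V.subtype := by
        simp only [LinearMap.lTensor, LinearMap.rTensor, ← TensorProduct.map_comp,
          LinearMap.comp_id, LinearMap.id_comp]
      exact LinearMap.congr_fun this _
    simp only [LinearMap.coe_comp, Function.comp_apply]
    rw [e1, map_subComul_apply]
    simp [TensorProduct.mk_apply]

end Aux

/-- Let `f, g : C → D` be two coalgebra maps and let `E` be the sum of all subcoalgebras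
of `C` contained in `S = {c | f c = g c}`.  Then `E` carries a coalgebra structure for
which the inclusion `i : E → C` is a coalgebra map, `f ∘ i = g ∘ i`, and for every
coalgebra `E'` and every coalgebra map `h : E' → C` with `f ∘ h = g ∘ h` there is a
unique coalgebra map `h' : E' → E` with `i ∘ h' = h`; that is, `(E, i)` is an equalizer
of `f` and `g` in the category of `k`-coalgebras. -/
theorem sum_of_subcoalgebras_is_equalizer {k : Type u} [Field k] {C D : Type v}
    [AddCommGroup C] [Module k C] [Coalgebra k C]
    [AddCommGroup D] [Module k D] [Coalgebra k D]
    (f g : C →ₗc[k] D) (E : Submodule k C)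
    (hE : E = sSup {V : Submodule k C |
      IsSubcoalgebra V ∧ V ≤ LinearMap.ker (f.toLinearMap - g.toLinearMap)}) :
    ∃ _inst : Coalgebra k ↥E, ∃ i : ↥E →ₗc[k] C,
      i.toLinearMap = E.subtype ∧
      f.comp i = g.comp i ∧
      ∀ (E' : Type w) [AddCommGroup E'] [Module k E'] [Coalgebra k E'] (h : E' →ₗc[k] C),
        f.comp h = g.comp h → ∃! h' : E' →ₗc[k] ↥E, i.comp h' = h := by
  -- E is a subcoalgebra
  have hEsub : IsSubcoalgebra E := by
    have key : sSup {V : Submodule k C |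
        IsSubcoalgebra V ∧ V ≤ LinearMap.ker (f.toLinearMap - g.toLinearMap)} ≤
        Submodule.comap (Coalgebra.comul (R := k))
          (LinearMap.range (TensorProduct.map E.subtype E.subtype)) := by
      apply sSup_le
      rintro V ⟨hVsub, hVle⟩
      intro x hx
      rw [Submodule.mem_comap]
      obtain ⟨t, ht⟩ := hVsub x hx
      have hVE : V ≤ E := hE ▸ le_sSup ⟨hVsub, hVle⟩
      refine ⟨TensorProduct.map (Submodule.inclusion hVE) (Submodule.inclusion hVE) t, ?_⟩
      rw [← ht]
      have : TensorProduct.map E.subtype E.subtype ∘ₗ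
          TensorProduct.map (Submodule.inclusion hVE) (Submodule.inclusion hVE) =
          TensorProduct.map V.subtype V.subtype := by
        rw [← TensorProduct.map_comp]; rfl
      exact LinearMap.congr_fun this t
    intro v hv
    rw [hE] at hv
    exact key hv
  letI inst : Coalgebra k ↥E := subCoalgebra E hEsub
  refine ⟨inst, ?_⟩
  have hEker : E ≤ LinearMap.ker (f.toLinearMap - g.toLinearMap) :=
    hE ▸ sSup_le (fun V hV => hV.2)
  refine ⟨{ toLinearMap := E.subtype
            counit_comp := rfl
            map_comp_comul := map_subComul E hEsub }, rfl, ?_, ?_⟩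
  · apply CoalgHom.ext
    intro x
    have hx := hEker x.2
    rw [LinearMap.mem_ker, LinearMap.sub_apply, sub_eq_zero] at hx
    exact hx
  · intro E' _ _ _ h hfg
    have hrange : LinearMap.range h.toLinearMap ≤ E := by
      rw [hE]
      apply le_sSup
      constructor
      · rintro _ ⟨x, rfl⟩
        refine ⟨TensorProduct.map h.toLinearMap.rangeRestrict h.toLinearMap.rangeRestrict
          (Coalgebra.comul (R := k) x), ?_⟩
        have : TensorProduct.map (LinearMap.range h.toLinearMap).subtype
            (LinearMap.range h.toLinearMap).subtype ∘ₗ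
            TensorProduct.map h.toLinearMap.rangeRestrict h.toLinearMap.rangeRestrict =
            TensorProduct.map h.toLinearMap h.toLinearMap := by
          rw [← TensorProduct.map_comp]; rfl
        exact (LinearMap.congr_fun this _).trans (CoalgHomClass.map_comp_comul_apply h x)
      · rintro _ ⟨x, rfl⟩
        rw [LinearMap.mem_ker, LinearMap.sub_apply, sub_eq_zero]
        exact DFunLike.congr_fun hfg x
    have hmem : ∀ x : E', h x ∈ E := fun x => hrange ⟨x, rfl⟩
    let h'lin : E' →ₗ[k] ↥E := h.toLinearMap.codRestrict E hmem
    have hsub : E.subtype ∘ₗ h'lin = h.toLinearMap := rfl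
    have hcomul : TensorProduct.map h'lin h'lin ∘ₗ (Coalgebra.comul (R := k)) =
        (Coalgebra.comul (R := k)) ∘ₗ h'lin := by
      apply LinearMap.ext
      intro x
      apply subtype_tmap_injective E
      have e1 : TensorProduct.map E.subtype E.subtype
          (TensorProduct.map h'lin h'lin ((Coalgebra.comul (R := k)) x)) =
          TensorProduct.map h.toLinearMap h.toLinearMap ((Coalgebra.comul (R := k)) x) := by
        have : TensorProduct.map E.subtype E.subtype ∘ₗ TensorProduct.map h'lin h'lin =
            TensorProduct.map h.toLinearMap h.toLinearMap := by
          rw [← TensorProduct.map_comp]; rfl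
        exact LinearMap.congr_fun this _
      simp only [LinearMap.coe_comp, Function.comp_apply]
      rw [e1]
      rw [show ((Coalgebra.comul (R := k)) : ↥E →ₗ[k] ↥E ⊗[k] ↥E) = subComul E hEsub from rfl,
        map_subComul_apply]
      exact CoalgHomClass.map_comp_comul_apply h x
    refine ⟨{ toLinearMap := h'lin
              counit_comp := ?_
              map_comp_comul := hcomul }, ?_, ?_⟩
    · apply LinearMap.ext
      intro x
      exact CoalgHomClass.counit_comp_apply h x
    · apply CoalgHom.ext
      intro x
      rfl
    · intro h'' hh''
      apply CoalgHom.ext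
      intro x
      apply Subtype.ext
      exact DFunLike.congr_fun hh'' x
end

section
/- The category of coalgebras over a field k has equalizers of all pairs of parallel morphisms. -/
universe u v

open CategoryTheory CategoryTheory.Limits TensorProduct

set_option linter.unusedSectionVars false

namespace CoalgebraCatEqAux

open Coalgebra LinearMap

variable {k : Type u} [Field k]

section maps
variable {M N P Q : Type v} [AddCommGroup M] [Module k M] [AddCommGroup N] [Module k N]
  [AddCommGroup P] [Module k P] [AddCommGroup Q] [Module k Q]

lemma map_inj {f : M →ₗ[k] P} {g : N →ₗ[k] Q} (hf : Function.Injective f)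
    (hg : Function.Injective g) : Function.Injective (TensorProduct.map f g) := by
  rw [← lTensor_comp_rTensor]
  exact (Module.Flat.lTensor_preserves_injective_linearMap g hg).comp
    (Module.Flat.rTensor_preserves_injective_linearMap f hf)

end maps

variable {A : Type v} [AddCommGroup A] [Module k A] [Coalgebra k A]

/-- The "tensor square" of a submodule, as a submodule of `A ⊗ A`. -/
noncomputable def tsq (E : Submodule k A) : Submodule k (A ⊗[k] A) :=
  LinearMap.range (TensorProduct.map E.subtype E.subtype)

lemma tsq_mono {E F : Submodule k A} (h : E ≤ F) : tsq E ≤ tsq F := by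
  rintro _ ⟨x, rfl⟩
  have he : TensorProduct.map E.subtype E.subtype =
      (TensorProduct.map F.subtype F.subtype) ∘ₗ
        (TensorProduct.map (Submodule.inclusion h) (Submodule.inclusion h)) := by
    rw [← TensorProduct.map_comp, Submodule.subtype_comp_inclusion]
  rw [he]
  exact ⟨_, rfl⟩

lemma range_map_le_tsq {T : Type v} [AddCommGroup T] [Module k T] (t : T →ₗ[k] A) :
    LinearMap.range (TensorProduct.map t t) ≤ tsq (LinearMap.range t) := by
  rintro _ ⟨x, rfl⟩
  have he : TensorProduct.map t t =
      (TensorProduct.map (LinearMap.range t).subtype (LinearMap.range t).subtype) ∘ₗ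
        (TensorProduct.map t.rangeRestrict t.rangeRestrict) := by
    rw [← TensorProduct.map_comp]; rfl
  rw [he]
  exact ⟨_, rfl⟩

variable {B : Type v} [AddCommGroup B] [Module k B] [Coalgebra k B]

/-- The underlying submodule of the equalizer of two coalgebra morphisms:
the largest subcoalgebra contained in the linear equalizer. -/
noncomputable def eqSub (f g : A →ₗc[k] B) : Submodule k A :=
  sSup {C | (∀ x ∈ C, comul (R := k) x ∈ tsq C) ∧ ∀ x ∈ C, f x = g x}

lemma le_eqSub {f g : A →ₗc[k] B} {C : Submodule k A}
    (h1 : ∀ x ∈ C, comul (R := k) x ∈ tsq C) (h2 : ∀ x ∈ C, f x = g x) :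
    C ≤ eqSub f g :=
  le_sSup ⟨h1, h2⟩

lemma eqSub_comul {f g : A →ₗc[k] B} : ∀ x ∈ eqSub f g, comul (R := k) x ∈ tsq (eqSub f g) := by
  intro x hx
  rw [eqSub, sSup_eq_iSup'] at hx
  refine Submodule.iSup_induction _ (motive := fun y => comul (R := k) y ∈ tsq (eqSub f g)) hx
    (fun C y hy => ?_) (by simp) (fun y z hy hz => by simpa [map_add] using add_mem hy hz)
  exact tsq_mono (le_sSup C.2) (C.2.1 y hy)

lemma eqSub_eq {f g : A →ₗc[k] B} : ∀ x ∈ eqSub f g, f x = g x := by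
  intro x hx
  rw [eqSub, sSup_eq_iSup'] at hx
  refine Submodule.iSup_induction _ (motive := fun y => f y = g y) hx
    (fun C y hy => C.2.2 y hy) (by simp) (fun y z hy hz => by simp [map_add, hy, hz])

variable (f g : A →ₗc[k] B)

local notation "E" => eqSub f g

lemma tsq_inj : Function.Injective (TensorProduct.map (E).subtype (E).subtype) :=
  map_inj (Submodule.injective_subtype _) (Submodule.injective_subtype _)

set_option maxHeartbeats 1000000 in
/-- Comultiplication on the equalizer submodule. -/
noncomputable def scomul : (E) →ₗ[k] (E) ⊗[k] (E) :=
  (LinearEquiv.ofInjective (TensorProduct.map (E).subtype (E).subtype)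
      (tsq_inj f g)).symm.toLinearMap ∘ₗ
    LinearMap.codRestrict _ (comul ∘ₗ (E).subtype)
      (fun x => eqSub_comul (f := f) (g := g) x x.2)

lemma map_scomul_apply (x : E) :
    TensorProduct.map (E).subtype (E).subtype (scomul f g x) = comul (R := k) (x : A) := by
  have h1 : (LinearEquiv.ofInjective (TensorProduct.map (E).subtype (E).subtype)
        (tsq_inj f g)) (scomul f g x)
      = LinearMap.codRestrict _ (comul ∘ₗ (E).subtype)
          (fun x => eqSub_comul (f := f) (g := g) x x.2) x := by
    rw [scomul]
    exact LinearEquiv.apply_symm_apply _ _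
  calc TensorProduct.map (E).subtype (E).subtype (scomul f g x)
      = ((LinearEquiv.ofInjective _ (tsq_inj f g)) (scomul f g x) : A ⊗[k] A) :=
        (LinearEquiv.ofInjective_apply _ _).symm
    _ = comul (R := k) (x : A) := by rw [h1]; rfl

lemma map_comp_scomul :
    TensorProduct.map (E).subtype (E).subtype ∘ₗ scomul f g = comul ∘ₗ (E).subtype :=
  LinearMap.ext (map_scomul_apply f g)

lemma scomul_rTensor :
    TensorProduct.map (TensorProduct.map (E).subtype (E).subtype) (E).subtype ∘ₗ
        (scomul f g).rTensor (E) =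
      (comul (R := k) (A := A)).rTensor A ∘ₗ TensorProduct.map (E).subtype (E).subtype := by
  apply TensorProduct.ext'
  intro a b
  simp [map_scomul_apply]

lemma scomul_lTensor :
    TensorProduct.map (E).subtype (TensorProduct.map (E).subtype (E).subtype) ∘ₗ
        (scomul f g).lTensor (E) =
      (comul (R := k) (A := A)).lTensor A ∘ₗ TensorProduct.map (E).subtype (E).subtype := by
  apply TensorProduct.ext'
  intro a b
  simp [map_scomul_apply]

lemma scoassoc :
    TensorProduct.assoc k ↥(E) ↥(E) ↥(E) ∘ₗ (scomul f g).rTensor ↥(E) ∘ₗ scomul f g =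
      (scomul f g).lTensor ↥(E) ∘ₗ scomul f g := by
  apply LinearMap.ext
  intro x
  apply map_inj (k := k) (Submodule.injective_subtype (E)) (tsq_inj f g)
  have h1 := TensorProduct.map_map_assoc (E).subtype (E).subtype (E).subtype
    ((scomul f g).rTensor _ (scomul f g x))
  have h2 := congr($(scomul_rTensor f g) (scomul f g x))
  have h3 := congr($(scomul_lTensor f g) (scomul f g x))
  have h4 := map_scomul_apply f g x
  simp only [LinearMap.comp_apply, LinearMap.coe_comp, LinearEquiv.coe_coe,
    Function.comp_apply] at h2 h3 ⊢
  rw [h1, h2, h4, Coalgebra.coassoc_apply, h3, h4]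

lemma srTensor_counit :
    (counit (R := k) ∘ₗ (E).subtype).rTensor ↥(E) ∘ₗ scomul f g =
      TensorProduct.mk k k ↥(E) 1 := by
  apply LinearMap.ext
  intro x
  apply Module.Flat.lTensor_preserves_injective_linearMap (M := k)
    (E).subtype (Submodule.injective_subtype (E))
  have h1 : (E).subtype.lTensor k ∘ₗ (counit (R := k) ∘ₗ (E).subtype).rTensor (E) =
      (counit (R := k) (A := A)).rTensor A ∘ₗ TensorProduct.map (E).subtype (E).subtype := by
    apply TensorProduct.ext'
    intro a b
    simp
  rw [LinearMap.comp_apply]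
  calc (E).subtype.lTensor k (((counit (R := k) ∘ₗ (E).subtype).rTensor (E)) (scomul f g x))
      = (counit (R := k) (A := A)).rTensor A
          (TensorProduct.map (E).subtype (E).subtype (scomul f g x)) :=
        congr($(h1) (scomul f g x))
    _ = (1 : k) ⊗ₜ[k] (x : A) := by rw [map_scomul_apply]; simp
    _ = (E).subtype.lTensor k (TensorProduct.mk k k (E) 1 x) := by simp

lemma slTensor_counit :
    (counit (R := k) ∘ₗ (E).subtype).lTensor ↥(E) ∘ₗ scomul f g =
      (TensorProduct.mk k ↥(E) k).flip 1 := by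
  apply LinearMap.ext
  intro x
  apply Module.Flat.rTensor_preserves_injective_linearMap (M := k)
    (E).subtype (Submodule.injective_subtype (E))
  have h1 : (E).subtype.rTensor k ∘ₗ (counit (R := k) ∘ₗ (E).subtype).lTensor (E) =
      (counit (R := k) (A := A)).lTensor A ∘ₗ TensorProduct.map (E).subtype (E).subtype := by
    apply TensorProduct.ext'
    intro a b
    simp
  rw [LinearMap.comp_apply]
  calc (E).subtype.rTensor k (((counit (R := k) ∘ₗ (E).subtype).lTensor (E)) (scomul f g x))
      = (counit (R := k) (A := A)).lTensor A
          (TensorProduct.map (E).subtype (E).subtype (scomul f g x)) :=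
        congr($(h1) (scomul f g x))
    _ = (x : A) ⊗ₜ[k] (1 : k) := by rw [map_scomul_apply]; simp
    _ = (E).subtype.rTensor k ((TensorProduct.mk k (E) k).flip 1 x) := by simp

noncomputable instance eqCoalgebra : Coalgebra k ↥(E) where
  comul := scomul f g
  counit := counit (R := k) ∘ₗ (E).subtype
  coassoc := scoassoc f g
  rTensor_counit_comp_comul := srTensor_counit f g
  lTensor_counit_comp_comul := slTensor_counit f g


lemma eq_comul_def : (comul (R := k) (A := ↥(E))) = scomul f g := rfl

/-- The inclusion of the equalizer subcoalgebra, as a coalgebra hom. -/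
noncomputable def eqIncl : ↥(E) →ₗc[k] A :=
  { (E).subtype with
    counit_comp := rfl
    map_comp_comul := map_comp_scomul f g }

@[simp] lemma eqIncl_apply (x : ↥(E)) : eqIncl f g x = (x : A) := rfl

variable {T : Type v} [AddCommGroup T] [Module k T] [Coalgebra k T]

lemma range_le_eqSub (t : T →ₗc[k] A) (h : ∀ x, f (t x) = g (t x)) :
    LinearMap.range t.toLinearMap ≤ (E) := by
  refine le_eqSub (fun x hx => ?_) (fun x hx => ?_)
  · obtain ⟨y, rfl⟩ := hx
    refine range_map_le_tsq (t.toLinearMap) ?_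
    have := CoalgHomClass.map_comp_comul_apply t y
    exact ⟨comul (R := k) y, this.symm ▸ rfl⟩
  · obtain ⟨y, rfl⟩ := hx
    exact h y

/-- The lift of a coalgebra hom equalizing `f` and `g` to the equalizer. -/
noncomputable def eqLift (t : T →ₗc[k] A) (h : ∀ x, f (t x) = g (t x)) :
    T →ₗc[k] ↥(E) :=
  { LinearMap.codRestrict (E) t.toLinearMap
      (fun y => range_le_eqSub f g t h ⟨y, rfl⟩) with
    counit_comp := by
      ext y
      exact CoalgHomClass.counit_comp_apply t y
    map_comp_comul := by
      apply LinearMap.ext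
      intro y
      apply tsq_inj f g
      have key : TensorProduct.map (E).subtype (E).subtype ∘ₗ
          TensorProduct.map
            (LinearMap.codRestrict (E) t.toLinearMap
              (fun y => range_le_eqSub f g t h ⟨y, rfl⟩))
            (LinearMap.codRestrict (E) t.toLinearMap
              (fun y => range_le_eqSub f g t h ⟨y, rfl⟩)) =
          TensorProduct.map t.toLinearMap t.toLinearMap := by
        rw [← TensorProduct.map_comp]; rfl
      simp only [LinearMap.comp_apply]
      rw [← LinearMap.comp_apply (TensorProduct.map _ _), key, eq_comul_def, map_scomul_apply]
      exact CoalgHomClass.map_comp_comul_apply t y }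

@[simp] lemma eqLift_apply (t : T →ₗc[k] A) (h : ∀ x, f (t x) = g (t x)) (y : T) :
    (eqLift f g t h y : A) = t y := rfl

end CoalgebraCatEqAux

open CoalgebraCatEqAux in
/-- The category of coalgebras over a field `k` has equalizers of all pairs of
parallel morphisms. -/
theorem CoalgebraCat.hasEqualizers (k : Type u) [Field k] :
    HasEqualizers (CoalgCat.{v} k) := by
  have : ∀ {X Y : CoalgCat.{v} k} {f g : X ⟶ Y}, HasLimit (parallelPair f g) := by
    intro X Y f g
    let F := f.toCoalgHom
    let G := g.toCoalgHom
    let i : CoalgCat.of k ↥(eqSub F G) ⟶ X := ⟨eqIncl F G⟩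
    have w : i ≫ f = i ≫ g := by
      apply CoalgCat.hom_ext
      apply CoalgHom.ext
      intro x
      exact eqSub_eq (f := F) (g := G) x.1 x.2
    refine HasLimit.mk ⟨Fork.ofι i w, Fork.IsLimit.mk' _ fun s => ?_⟩
    have hs : ∀ x, F (s.ι.toCoalgHom x) = G (s.ι.toCoalgHom x) := by
      intro x
      exact CoalgHom.congr_fun (congrArg CoalgCat.Hom.toCoalgHom s.condition) x
    refine ⟨⟨eqLift F G s.ι.toCoalgHom hs⟩, ?_, ?_⟩
    · apply CoalgCat.hom_ext
      apply CoalgHom.ext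
      intro x
      rfl
    · intro m hm
      apply CoalgCat.hom_ext
      apply CoalgHom.ext
      intro x
      apply Subtype.ext
      exact CoalgHom.congr_fun (congrArg CoalgCat.Hom.toCoalgHom hm) x
  exact hasEqualizers_of_hasLimit_parallelPair _
end

section
/- Let k be a field and f, g : C → D two morphisms of k-coalgebras. Define E = { c ∈ C | c₍₁₎ ⊗ f(c₍₂₎) ⊗ c₍₃₎ = c₍₁₎ ⊗ g(c₍₂₎) ⊗ c₍₃₎ }, i.e., the set of c ∈ C with (id_C ⊗ f ⊗ id_C)((Δ ⊗ id)Δ(c)) = (id_C ⊗ g ⊗ id_C)((Δ ⊗ id)Δ(c)) in C ⊗ D ⊗ C. Then E is a subcoalgebra of C and the pair (E, i), with i : E → C the canonical inclusion, is an equalizer of f and g in the category of k-coalgebras. -/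
universe u v w

open TensorProduct LinearMap Coalgebra

set_option maxHeartbeats 1000000

namespace SweedlerEq

variable {k : Type u} [Field k]

set_option linter.unusedSectionVars false


section Linear

variable {M N P Q M' N' P' : Type*}
  [AddCommGroup M] [AddCommGroup N] [AddCommGroup P] [AddCommGroup Q]
  [AddCommGroup M'] [AddCommGroup N'] [AddCommGroup P']
  [Module k M] [Module k N] [Module k P] [Module k Q]
  [Module k M'] [Module k N'] [Module k P']

lemma map_injective {f : M →ₗ[k] N} {g : P →ₗ[k] Q}
    (hf : Function.Injective f) (hg : Function.Injective g) :
    Function.Injective (TensorProduct.map f g) := by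
  rw [← LinearMap.rTensor_comp_lTensor, LinearMap.coe_comp]
  exact (Module.Flat.rTensor_preserves_injective_linearMap f hf).comp
    (Module.Flat.lTensor_preserves_injective_linearMap g hg)

lemma ker_rTensor_eq (φ : M →ₗ[k] N) :
    range ((ker φ).subtype.rTensor P) = ker (φ.rTensor P) :=
  (LinearMap.exact_iff.mp
    (Module.Flat.rTensor_exact P (LinearMap.exact_subtype_ker_map φ))).symm

lemma ker_lTensor_eq (φ : M →ₗ[k] N) :
    range ((ker φ).subtype.lTensor P) = ker (φ.lTensor P) :=
  (LinearMap.exact_iff.mp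
    (Module.Flat.lTensor_exact P (LinearMap.exact_subtype_ker_map φ))).symm

lemma range_map_subtype (V : Submodule k M) (W : Submodule k N) :
    range (TensorProduct.map V.subtype W.subtype) =
      range (V.subtype.rTensor N) ⊓ range (W.subtype.lTensor M) := by
  apply le_antisymm
  · apply le_inf
    · rw [← LinearMap.rTensor_comp_lTensor]
      exact LinearMap.range_comp_le_range _ _
    · rw [← LinearMap.lTensor_comp_rTensor]
      exact LinearMap.range_comp_le_range _ _
  · rintro x ⟨⟨y, rfl⟩, hx2⟩
    have hexact : range (W.subtype.lTensor M) = ker (W.mkQ.lTensor M) :=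
      (LinearMap.exact_iff.mp
        (Module.Flat.lTensor_exact M (LinearMap.exact_subtype_mkQ W))).symm
    rw [hexact] at hx2
    simp only [SetLike.mem_coe, mem_ker] at hx2
    have hcomm : (W.mkQ.lTensor M) ∘ₗ (V.subtype.rTensor N) =
        (V.subtype.rTensor (N ⧸ W)) ∘ₗ (W.mkQ.lTensor V) := by
      rw [LinearMap.lTensor_comp_rTensor, LinearMap.rTensor_comp_lTensor]
    have h0 : V.subtype.rTensor (N ⧸ W) ((W.mkQ.lTensor V) y) = 0 := by
      have := LinearMap.congr_fun hcomm y
      simp only [LinearMap.comp_apply] at this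
      rw [← this, hx2]
    have hy0 : (W.mkQ.lTensor V) y = 0 :=
      (LinearMap.map_eq_zero_iff _ (Module.Flat.rTensor_preserves_injective_linearMap
        V.subtype V.injective_subtype)).mp h0
    have : y ∈ range (W.subtype.lTensor V) := by
      rw [show range (W.subtype.lTensor V) = ker (W.mkQ.lTensor V) from
        (LinearMap.exact_iff.mp
          (Module.Flat.lTensor_exact V (LinearMap.exact_subtype_mkQ W))).symm, mem_ker]
      exact hy0
    obtain ⟨z, rfl⟩ := this
    refine ⟨z, ?_⟩
    rw [← LinearMap.comp_apply, LinearMap.rTensor_comp_lTensor]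

end Linear



section Toolkit

variable {M N P Q S T M' N' P' : Type*}
  [AddCommGroup M] [AddCommGroup N] [AddCommGroup P] [AddCommGroup Q]
  [AddCommGroup S] [AddCommGroup T] [AddCommGroup M'] [AddCommGroup N'] [AddCommGroup P']
  [Module k M] [Module k N] [Module k P] [Module k Q]
  [Module k S] [Module k T] [Module k M'] [Module k N'] [Module k P']

lemma map_comp_map (f₂ : P →ₗ[k] P') (f₁ : M →ₗ[k] P) (g₂ : Q →ₗ[k] N') (g₁ : N →ₗ[k] Q) :
    map f₂ g₂ ∘ₗ map f₁ g₁ = map (f₂ ∘ₗ f₁) (g₂ ∘ₗ g₁) :=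
  (TensorProduct.map_comp f₂ g₂ f₁ g₁).symm

lemma map_comp_map' (f₂ : P →ₗ[k] P') (f₁ : M →ₗ[k] P) (g₂ : Q →ₗ[k] N') (g₁ : N →ₗ[k] Q)
    (h : M' →ₗ[k] M ⊗[k] N) :
    map f₂ g₂ ∘ₗ (map f₁ g₁ ∘ₗ h) = map (f₂ ∘ₗ f₁) (g₂ ∘ₗ g₁) ∘ₗ h := by
  rw [← LinearMap.comp_assoc, map_comp_map]

lemma assoc_symm_nat (f : M →ₗ[k] Q) (g : N →ₗ[k] S) (h : P →ₗ[k] T) :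
    map (map f g) h ∘ₗ (TensorProduct.assoc k M N P).symm.toLinearMap =
      (TensorProduct.assoc k Q S T).symm.toLinearMap ∘ₗ map f (map g h) :=
  map_map_comp_assoc_symm_eq f g h

lemma assoc_symm_nat' (f : M →ₗ[k] Q) (g : N →ₗ[k] S) (h : P →ₗ[k] T)
    (i : M' →ₗ[k] M ⊗[k] (N ⊗[k] P)) :
    map (map f g) h ∘ₗ ((TensorProduct.assoc k M N P).symm.toLinearMap ∘ₗ i) =
      (TensorProduct.assoc k Q S T).symm.toLinearMap ∘ₗ (map f (map g h) ∘ₗ i) := by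
  rw [← LinearMap.comp_assoc, assoc_symm_nat, LinearMap.comp_assoc]

lemma assoc_nat (f : M →ₗ[k] Q) (g : N →ₗ[k] S) (h : P →ₗ[k] T) :
    map f (map g h) ∘ₗ (TensorProduct.assoc k M N P).toLinearMap =
      (TensorProduct.assoc k Q S T).toLinearMap ∘ₗ map (map f g) h :=
  map_map_comp_assoc_eq f g h

lemma assoc_nat' (f : M →ₗ[k] Q) (g : N →ₗ[k] S) (h : P →ₗ[k] T)
    (i : M' →ₗ[k] (M ⊗[k] N) ⊗[k] P) :
    map f (map g h) ∘ₗ ((TensorProduct.assoc k M N P).toLinearMap ∘ₗ i) =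
      (TensorProduct.assoc k Q S T).toLinearMap ∘ₗ (map (map f g) h ∘ₗ i) := by
  rw [← LinearMap.comp_assoc, assoc_nat, LinearMap.comp_assoc]

lemma assoc_comp_lTensor (f' : P →ₗ[k] Q) :
    (TensorProduct.assoc k M N Q).toLinearMap ∘ₗ f'.lTensor (M ⊗[k] N) =
      (f'.lTensor N).lTensor M ∘ₗ (TensorProduct.assoc k M N P).toLinearMap := by
  apply TensorProduct.ext_threefold
  intro x y z
  simp

end Toolkit

section Coalg

variable {C D : Type*}
  [AddCommGroup C] [Module k C] [Coalgebra k C]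
  [AddCommGroup D] [Module k D] [Coalgebra k D]

/-- `c ↦ c₍₁₎ ⊗ f'(c₍₂₎) ⊗ c₍₃₎`. -/
noncomputable def psi (f' : C →ₗ[k] D) : C →ₗ[k] (C ⊗[k] D) ⊗[k] C :=
  map (map LinearMap.id f') LinearMap.id ∘ₗ
    LinearMap.rTensor C (Coalgebra.comul (R := k) (A := C)) ∘ₗ Coalgebra.comul

lemma identR {X : Type*} [AddCommGroup X] [Module k X] (F : C ⊗[k] C →ₗ[k] X) :
    (map F LinearMap.id ∘ₗ LinearMap.rTensor C (Coalgebra.comul (R := k) (A := C)) ∘ₗ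
        Coalgebra.comul).rTensor C ∘ₗ Coalgebra.comul =
      (TensorProduct.assoc k X C C).symm.toLinearMap ∘ₗ
        Coalgebra.comul.lTensor X ∘ₗ
        (map F LinearMap.id ∘ₗ LinearMap.rTensor C (Coalgebra.comul (R := k) (A := C)) ∘ₗ
          Coalgebra.comul) := by
  rw [LinearMap.rTensor_comp, LinearMap.rTensor_comp, LinearMap.comp_assoc,
    LinearMap.comp_assoc]
  conv_lhs => rw [← Coalgebra.coassoc_symm]
  simp only [LinearMap.rTensor, LinearMap.lTensor, assoc_symm_nat', map_comp_map', map_comp_map,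
    TensorProduct.map_id, LinearMap.id_comp, LinearMap.comp_id, LinearMap.comp_assoc]

lemma aux_mid0 (f' : C →ₗ[k] D) :
    (TensorProduct.assoc k C C D).toLinearMap ∘ₗ map Coalgebra.comul f' ∘ₗ Coalgebra.comul =
      map LinearMap.id (map LinearMap.id f' ∘ₗ Coalgebra.comul) ∘ₗ Coalgebra.comul := by
  rw [← LinearMap.lTensor_comp_rTensor, LinearMap.comp_assoc, ← LinearMap.comp_assoc _ _
    (TensorProduct.assoc k C C D).toLinearMap, assoc_comp_lTensor, LinearMap.comp_assoc,
    Coalgebra.coassoc]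
  simp only [LinearMap.lTensor, map_comp_map', LinearMap.id_comp, LinearMap.comp_id]

lemma aux_mid (f' : C →ₗ[k] D) :
    map LinearMap.id (map LinearMap.id f' ∘ₗ Coalgebra.comul) ∘ₗ Coalgebra.comul =
      (TensorProduct.assoc k C C D).toLinearMap ∘ₗ
        map (Coalgebra.comul (R := k) (A := C)) LinearMap.id ∘ₗ
        map LinearMap.id f' ∘ₗ Coalgebra.comul := by
  conv_rhs => rw [map_comp_map', LinearMap.comp_id, LinearMap.id_comp]
  exact (aux_mid0 f').symm

lemma aux_mid_sub (f' g' : C →ₗ[k] D) :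
    map LinearMap.id ((map LinearMap.id f' - map LinearMap.id g') ∘ₗ Coalgebra.comul) ∘ₗ
        Coalgebra.comul =
      (TensorProduct.assoc k C C D).toLinearMap ∘ₗ
        map (Coalgebra.comul (R := k) (A := C)) LinearMap.id ∘ₗ
        (map LinearMap.id f' - map LinearMap.id g') ∘ₗ Coalgebra.comul := by
  have d1 : map (LinearMap.id : C →ₗ[k] C)
      ((map LinearMap.id f' - map LinearMap.id g') ∘ₗ Coalgebra.comul (R := k) (A := C)) =
      map LinearMap.id (map LinearMap.id f' ∘ₗ Coalgebra.comul) -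
        map LinearMap.id (map LinearMap.id g' ∘ₗ Coalgebra.comul) := by
    rw [LinearMap.sub_comp]
    exact LinearMap.lTensor_sub _ _
  rw [d1, LinearMap.sub_comp, aux_mid f', aux_mid g', LinearMap.sub_comp,
    LinearMap.comp_sub, LinearMap.comp_sub]

lemma identL (F : C ⊗[k] C →ₗ[k] C ⊗[k] D)
    (haux : map LinearMap.id (F ∘ₗ Coalgebra.comul) ∘ₗ Coalgebra.comul =
      (TensorProduct.assoc k C C D).toLinearMap ∘ₗ
        map (Coalgebra.comul (R := k) (A := C)) LinearMap.id ∘ₗ F ∘ₗ Coalgebra.comul) :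
    (map F LinearMap.id ∘ₗ LinearMap.rTensor C (Coalgebra.comul (R := k) (A := C)) ∘ₗ
        Coalgebra.comul).lTensor C ∘ₗ Coalgebra.comul =
      (TensorProduct.assoc k C (C ⊗[k] D) C).toLinearMap ∘ₗ
        ((TensorProduct.assoc k C C D).toLinearMap.rTensor C) ∘ₗ
        ((Coalgebra.comul.rTensor D).rTensor C) ∘ₗ
        (map F LinearMap.id ∘ₗ LinearMap.rTensor C (Coalgebra.comul (R := k) (A := C)) ∘ₗ
          Coalgebra.comul) := by
  rw [LinearMap.lTensor_comp, LinearMap.lTensor_comp, LinearMap.comp_assoc,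
    LinearMap.comp_assoc]
  conv_lhs => rw [← Coalgebra.coassoc]
  simp only [LinearMap.rTensor, LinearMap.lTensor, assoc_nat', map_comp_map', map_comp_map,
    TensorProduct.map_id, LinearMap.id_comp, LinearMap.comp_id, LinearMap.comp_assoc]
  rw [haux]


lemma sum_counit_smul {a : C} (r : Coalgebra.Repr k a (C × C)) :
    ∑ i ∈ r.index, Coalgebra.counit (R := k) (r.left i) • r.right i = a :=
  calc ∑ i ∈ r.index, Coalgebra.counit (R := k) (r.left i) • r.right i
      = TensorProduct.lid k C
          (∑ i ∈ r.index, Coalgebra.counit (R := k) (r.left i) ⊗ₜ[k] r.right i) := by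
        rw [map_sum]; simp [TensorProduct.lid_tmul]
    _ = TensorProduct.lid k C (1 ⊗ₜ[k] a) := by rw [Coalgebra.sum_counit_tmul_eq r]
    _ = a := by simp

lemma sum_smul_counit {a : C} (r : Coalgebra.Repr k a (C × C)) :
    ∑ i ∈ r.index, Coalgebra.counit (R := k) (r.right i) • r.left i = a :=
  calc ∑ i ∈ r.index, Coalgebra.counit (R := k) (r.right i) • r.left i
      = TensorProduct.rid k C
          (∑ i ∈ r.index, r.left i ⊗ₜ[k] Coalgebra.counit (R := k) (r.right i)) := by
        rw [map_sum]; simp [TensorProduct.rid_tmul]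
    _ = TensorProduct.rid k C (a ⊗ₜ[k] 1) := by rw [Coalgebra.sum_tmul_counit_eq r]
    _ = a := by simp

/-- `psi f' (h x) = ∑ h(x₍₁₎) ⊗ f'(h(x₍₂₎)) ⊗ h(x₍₃₎)` for a coalgebra map `h`. -/
lemma psi_comp_coalgHom_apply (f' : C →ₗ[k] D) {E' : Type*} [AddCommGroup E'] [Module k E']
    [Coalgebra k E'] (h : E' →ₗc[k] C) (x : E') (r : Coalgebra.Repr k x (E' × E'))
    (s : ∀ i, Coalgebra.Repr k (r.left i) (E' × E')) :
    psi f' (h x) = ∑ i ∈ r.index, ∑ j ∈ (s i).index,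
      (h ((s i).left j) ⊗ₜ[k] f' (h ((s i).right j))) ⊗ₜ[k] h (r.right i) := by
  have hcom : Coalgebra.comul (R := k) (h x) = ∑ i ∈ r.index, h (r.left i) ⊗ₜ[k] h (r.right i) := by
    rw [← CoalgHomClass.map_comp_comul_apply h x, ← r.eq]
    simp [map_sum]
  have hcl : ∀ i, Coalgebra.comul (R := k) (h (r.left i)) =
      ∑ j ∈ (s i).index, h ((s i).left j) ⊗ₜ[k] h ((s i).right j) := by
    intro i
    rw [← CoalgHomClass.map_comp_comul_apply h (r.left i), ← (s i).eq]
    simp [map_sum]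
  rw [psi]
  simp only [LinearMap.comp_apply, hcom, map_sum, LinearMap.rTensor_tmul]
  refine Finset.sum_congr rfl fun i _ => ?_
  rw [hcl i, TensorProduct.sum_tmul]
  simp [map_sum]

lemma psi_apply (f' : C →ₗ[k] D) (c : C) (r : Coalgebra.Repr k c (C × C))
    (s : ∀ i, Coalgebra.Repr k (r.left i) (C × C)) :
    psi f' c = ∑ i ∈ r.index, ∑ j ∈ (s i).index,
      ((s i).left j ⊗ₜ[k] f' ((s i).right j)) ⊗ₜ[k] r.right i := by
  simpa using psi_comp_coalgHom_apply f' (CoalgHom.id k C) c r s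

/-- Applying `ε ⊗ id ⊗ ε` to `psi f' c` recovers `f' c`. -/
lemma extract_psi (f' : C →ₗ[k] D) (c : C) :
    ((TensorProduct.lid k D).toLinearMap ∘ₗ
      (Coalgebra.counit (R := k) (A := C)).rTensor D ∘ₗ
      (TensorProduct.rid k (C ⊗[k] D)).toLinearMap ∘ₗ
      (Coalgebra.counit (R := k) (A := C)).lTensor (C ⊗[k] D)) (psi f' c) = f' c := by
  classical
  set r := Coalgebra.Repr.arbitrary k c
  set s := fun i => Coalgebra.Repr.arbitrary k (r.left i)
  rw [psi_apply f' c r s]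
  simp only [map_sum, LinearMap.comp_apply, LinearMap.lTensor_tmul, LinearMap.rTensor_tmul,
    TensorProduct.rid_tmul, TensorProduct.lid_tmul, map_smul, TensorProduct.smul_tmul',
    LinearEquiv.coe_coe]
  have key : ∀ i, ∑ j ∈ (s i).index,
      Coalgebra.counit (R := k) ((s i).left j) • f' ((s i).right j) = f' (r.left i) := by
    intro i
    conv_rhs => rw [← sum_counit_smul (s i)]
    rw [map_sum]
    simp [map_smul]
  trans ∑ i ∈ r.index, Coalgebra.counit (R := k) (r.right i) • f' (r.left i)
  · refine Finset.sum_congr rfl fun i _ => ?_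
    simp only [smul_eq_mul, mul_smul]
    rw [← Finset.smul_sum, key i]
  · conv_rhs => rw [← sum_smul_counit r]
    rw [map_sum]
    simp [map_smul]

end Coalg


end SweedlerEq

open SweedlerEq

/-- Let `f, g : C → D` be coalgebra maps and let
`E = {c ∈ C | c₍₁₎ ⊗ f(c₍₂₎) ⊗ c₍₃₎ = c₍₁₎ ⊗ g(c₍₂₎) ⊗ c₍₃₎}`, i.e. the kernel of
`(id ⊗ f ⊗ id) ∘ (Δ ⊗ id) ∘ Δ - (id ⊗ g ⊗ id) ∘ (Δ ⊗ id) ∘ Δ : C → (C ⊗ D) ⊗ C`.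
Then `E` is a subcoalgebra of `C` and `(E, i)`, with `i` the canonical inclusion,
is an equalizer of `f` and `g` in the category of `k`-coalgebras. -/
theorem sweedler_equalizer_isSubcoalgebra_and_equalizer {k : Type u} [Field k] {C D : Type v}
    [AddCommGroup C] [Module k C] [Coalgebra k C]
    [AddCommGroup D] [Module k D] [Coalgebra k D]
    (f g : C →ₗc[k] D) (E : Submodule k C)
    (hE : E = LinearMap.ker
      ((TensorProduct.map (TensorProduct.map (LinearMap.id : C →ₗ[k] C) f.toLinearMap)
          (LinearMap.id : C →ₗ[k] C) -
        TensorProduct.map (TensorProduct.map (LinearMap.id : C →ₗ[k] C) g.toLinearMap)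
          (LinearMap.id : C →ₗ[k] C)) ∘ₗ
        LinearMap.rTensor C (Coalgebra.comul (R := k) (A := C)) ∘ₗ
        Coalgebra.comul (R := k) (A := C))) :
    IsSubcoalgebra E ∧
    ∃ _inst : Coalgebra k ↥E, ∃ i : ↥E →ₗc[k] C,
      i.toLinearMap = E.subtype ∧
      f.comp i = g.comp i ∧
      ∀ (E' : Type w) [AddCommGroup E'] [Module k E'] [Coalgebra k E'] (h : E' →ₗc[k] C),
        f.comp h = g.comp h → ∃! h' : E' →ₗc[k] ↥E, i.comp h' = h := by
  classical
  subst hE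
  set f' := f.toLinearMap with hf'
  set g' := g.toLinearMap with hg'
  set Φ := (TensorProduct.map (TensorProduct.map (LinearMap.id : C →ₗ[k] C) f')
          (LinearMap.id : C →ₗ[k] C) -
        TensorProduct.map (TensorProduct.map (LinearMap.id : C →ₗ[k] C) g')
          (LinearMap.id : C →ₗ[k] C)) ∘ₗ
        LinearMap.rTensor C (Coalgebra.comul (R := k) (A := C)) ∘ₗ
        Coalgebra.comul (R := k) (A := C) with hPhi
  set H := TensorProduct.map (LinearMap.id : C →ₗ[k] C) f' -
    TensorProduct.map (LinearMap.id : C →ₗ[k] C) g' with hH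
  have hfac : Φ = TensorProduct.map H LinearMap.id ∘ₗ
      LinearMap.rTensor C (Coalgebra.comul (R := k) (A := C)) ∘ₗ
      Coalgebra.comul (R := k) (A := C) := by
    rw [hPhi, hH]
    congr 1
    exact (LinearMap.rTensor_sub _ _).symm
  have hPhiApply : ∀ c : C, Φ c = psi f' c - psi g' c := by
    intro c
    rw [hPhi]
    simp only [LinearMap.comp_apply, LinearMap.sub_apply]
    rfl
  have hpsi_mem : ∀ c ∈ LinearMap.ker Φ, psi f' c = psi g' c := by
    intro c hc
    have hc' := LinearMap.mem_ker.mp hc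
    rw [hPhiApply, sub_eq_zero] at hc'
    exact hc'
  have hpsi_mem' : ∀ c : C, psi f' c = psi g' c → c ∈ LinearMap.ker Φ := by
    intro c hc
    rw [LinearMap.mem_ker, hPhiApply, sub_eq_zero]
    exact hc
  -- the two kernel identities
  have hR : ∀ c ∈ LinearMap.ker Φ, (Φ.rTensor C) (Coalgebra.comul (R := k) c) = 0 := by
    intro c hc
    have hc0 : Φ c = 0 := LinearMap.mem_ker.mp hc
    have h0 : TensorProduct.map H LinearMap.id
        (LinearMap.rTensor C (Coalgebra.comul (R := k) (A := C))
          (Coalgebra.comul (R := k) c)) = 0 := by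
      have hx := LinearMap.congr_fun hfac c
      simp only [LinearMap.comp_apply] at hx
      rw [← hx]
      exact hc0
    have e := LinearMap.congr_fun (identR (k := k) H) c
    simp only [LinearMap.comp_apply] at e
    rw [hfac, e, h0, map_zero, map_zero]
  have hL : ∀ c ∈ LinearMap.ker Φ, (Φ.lTensor C) (Coalgebra.comul (R := k) c) = 0 := by
    intro c hc
    have hc0 : Φ c = 0 := LinearMap.mem_ker.mp hc
    have h0 : TensorProduct.map H LinearMap.id
        (LinearMap.rTensor C (Coalgebra.comul (R := k) (A := C))
          (Coalgebra.comul (R := k) c)) = 0 := by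
      have hx := LinearMap.congr_fun hfac c
      simp only [LinearMap.comp_apply] at hx
      rw [← hx]
      exact hc0
    have e := LinearMap.congr_fun (identL (k := k) H (aux_mid_sub f' g')) c
    simp only [LinearMap.comp_apply] at e
    rw [hfac, e, h0, map_zero, map_zero, map_zero]
  have part1 : IsSubcoalgebra (LinearMap.ker Φ) := by
    intro v hv
    rw [range_map_subtype, Submodule.mem_inf]
    constructor
    · rw [ker_rTensor_eq]
      exact LinearMap.mem_ker.mpr (hR v hv)
    · rw [ker_lTensor_eq]
      exact LinearMap.mem_ker.mpr (hL v hv)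
  refine ⟨part1, ?_⟩
  -- the coalgebra structure on E
  set ι : ↥(LinearMap.ker Φ) →ₗ[k] C := (LinearMap.ker Φ).subtype with hiota
  have hι : Function.Injective ι := Submodule.injective_subtype _
  have hj : Function.Injective (TensorProduct.map ι ι) := map_injective hι hι
  have hmem : ∀ x : ↥(LinearMap.ker Φ),
      (Coalgebra.comul (R := k) (A := C) ∘ₗ ι) x ∈ LinearMap.range (TensorProduct.map ι ι) :=
    fun x => part1 _ x.2
  set δE : ↥(LinearMap.ker Φ) →ₗ[k] (↥(LinearMap.ker Φ) ⊗[k] ↥(LinearMap.ker Φ)) :=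
    LinearMap.codRestrictOfInjective (Coalgebra.comul (R := k) (A := C) ∘ₗ ι)
      (TensorProduct.map ι ι) hj hmem with hdE
  have hjδ : TensorProduct.map ι ι ∘ₗ δE = Coalgebra.comul (R := k) (A := C) ∘ₗ ι :=
    LinearMap.codRestrictOfInjective_comp _ _ _ _
  set εE : ↥(LinearMap.ker Φ) →ₗ[k] k := Coalgebra.counit (R := k) (A := C) ∘ₗ ι with heE
  have split1 : TensorProduct.map (LinearMap.id : C →ₗ[k] C) (Coalgebra.comul (R := k) (A := C))
      ∘ₗ TensorProduct.map ι ι = TensorProduct.map ι (Coalgebra.comul (R := k) (A := C) ∘ₗ ι) := by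
    rw [map_comp_map, LinearMap.id_comp]
  have split2 : TensorProduct.map (Coalgebra.comul (R := k) (A := C)) (LinearMap.id : C →ₗ[k] C)
      ∘ₗ TensorProduct.map ι ι = TensorProduct.map (Coalgebra.comul (R := k) (A := C) ∘ₗ ι) ι := by
    rw [map_comp_map, LinearMap.id_comp]
  have hcoassoc : (TensorProduct.assoc k ↥(LinearMap.ker Φ) ↥(LinearMap.ker Φ)
        ↥(LinearMap.ker Φ)).toLinearMap ∘ₗ δE.rTensor _ ∘ₗ δE = δE.lTensor _ ∘ₗ δE := by
    have hJ : Function.Injective (TensorProduct.map ι (TensorProduct.map ι ι)) :=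
      map_injective hι hj
    have hA : TensorProduct.map ι (TensorProduct.map ι ι) ∘ₗ
        (TensorProduct.map LinearMap.id δE ∘ₗ δE) =
        TensorProduct.map (LinearMap.id : C →ₗ[k] C) (Coalgebra.comul (R := k) (A := C)) ∘ₗ
          (Coalgebra.comul (R := k) (A := C) ∘ₗ ι) := by
      calc TensorProduct.map ι (TensorProduct.map ι ι) ∘ₗ
            (TensorProduct.map LinearMap.id δE ∘ₗ δE)
          = TensorProduct.map (ι ∘ₗ LinearMap.id) (TensorProduct.map ι ι ∘ₗ δE) ∘ₗ δE := by
            rw [map_comp_map']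
        _ = TensorProduct.map ι (Coalgebra.comul (R := k) (A := C) ∘ₗ ι) ∘ₗ δE := by
            rw [LinearMap.comp_id, hjδ]
        _ = (TensorProduct.map LinearMap.id (Coalgebra.comul (R := k) (A := C)) ∘ₗ
              TensorProduct.map ι ι) ∘ₗ δE := by rw [split1]
        _ = TensorProduct.map LinearMap.id (Coalgebra.comul (R := k) (A := C)) ∘ₗ
              (Coalgebra.comul (R := k) (A := C) ∘ₗ ι) := by
            rw [LinearMap.comp_assoc, hjδ]
    have hB : TensorProduct.map ι (TensorProduct.map ι ι) ∘ₗ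
        ((TensorProduct.assoc k ↥(LinearMap.ker Φ) ↥(LinearMap.ker Φ)
          ↥(LinearMap.ker Φ)).toLinearMap ∘ₗ (TensorProduct.map δE LinearMap.id ∘ₗ δE)) =
        TensorProduct.map (LinearMap.id : C →ₗ[k] C) (Coalgebra.comul (R := k) (A := C)) ∘ₗ
          (Coalgebra.comul (R := k) (A := C) ∘ₗ ι) := by
      calc TensorProduct.map ι (TensorProduct.map ι ι) ∘ₗ
            ((TensorProduct.assoc k _ _ _).toLinearMap ∘ₗ
              (TensorProduct.map δE LinearMap.id ∘ₗ δE))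
          = (TensorProduct.assoc k C C C).toLinearMap ∘ₗ
              (TensorProduct.map (TensorProduct.map ι ι) ι ∘ₗ
                (TensorProduct.map δE LinearMap.id ∘ₗ δE)) := by
            rw [assoc_nat']
        _ = (TensorProduct.assoc k C C C).toLinearMap ∘ₗ
              (TensorProduct.map (TensorProduct.map ι ι ∘ₗ δE) (ι ∘ₗ LinearMap.id) ∘ₗ δE) := by
            rw [map_comp_map']
        _ = (TensorProduct.assoc k C C C).toLinearMap ∘ₗ
              (TensorProduct.map (Coalgebra.comul (R := k) (A := C) ∘ₗ ι) ι ∘ₗ δE) := by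
            rw [LinearMap.comp_id, hjδ]
        _ = (TensorProduct.assoc k C C C).toLinearMap ∘ₗ
              ((TensorProduct.map (Coalgebra.comul (R := k) (A := C)) LinearMap.id ∘ₗ
                TensorProduct.map ι ι) ∘ₗ δE) := by rw [split2]
        _ = (TensorProduct.assoc k C C C).toLinearMap ∘ₗ
              (TensorProduct.map (Coalgebra.comul (R := k) (A := C)) LinearMap.id ∘ₗ
                (Coalgebra.comul (R := k) (A := C) ∘ₗ ι)) := by
            rw [LinearMap.comp_assoc, hjδ]
        _ = ((TensorProduct.assoc k C C C).toLinearMap ∘ₗ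
              (TensorProduct.map (Coalgebra.comul (R := k) (A := C)) LinearMap.id ∘ₗ
                Coalgebra.comul (R := k) (A := C))) ∘ₗ ι := by
            rw [LinearMap.comp_assoc, LinearMap.comp_assoc]
        _ = (TensorProduct.map LinearMap.id (Coalgebra.comul (R := k) (A := C)) ∘ₗ
              Coalgebra.comul (R := k) (A := C)) ∘ₗ ι := by
            rw [show (TensorProduct.assoc k C C C).toLinearMap ∘ₗ
              (TensorProduct.map (Coalgebra.comul (R := k) (A := C)) LinearMap.id ∘ₗ
                Coalgebra.comul (R := k) (A := C)) =
              TensorProduct.map LinearMap.id (Coalgebra.comul (R := k) (A := C)) ∘ₗ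
                Coalgebra.comul (R := k) (A := C) from Coalgebra.coassoc]
        _ = TensorProduct.map LinearMap.id (Coalgebra.comul (R := k) (A := C)) ∘ₗ
              (Coalgebra.comul (R := k) (A := C) ∘ₗ ι) := by rw [LinearMap.comp_assoc]
    have hJs := hB.trans hA.symm
    refine LinearMap.ext fun x => hJ ?_
    have hx := LinearMap.congr_fun hJs x
    simp only [LinearMap.comp_apply] at hx ⊢
    exact hx
  have hcounitR : (εE.rTensor _) ∘ₗ δE = TensorProduct.mk k k ↥(LinearMap.ker Φ) 1 := by
    have hJ : Function.Injective (TensorProduct.map (LinearMap.id : k →ₗ[k] k) ι) :=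
      map_injective (fun a b hab => hab) hι
    have ax : TensorProduct.map (Coalgebra.counit (R := k) (A := C)) (LinearMap.id : C →ₗ[k] C)
        ∘ₗ Coalgebra.comul (R := k) (A := C) = TensorProduct.mk k k C 1 :=
      Coalgebra.rTensor_counit_comp_comul
    have hmk : TensorProduct.map (LinearMap.id : k →ₗ[k] k) ι ∘ₗ
        TensorProduct.mk k k ↥(LinearMap.ker Φ) 1 = TensorProduct.mk k k C 1 ∘ₗ ι := by
      refine LinearMap.ext fun x => ?_
      simp
    have hJs : TensorProduct.map (LinearMap.id : k →ₗ[k] k) ι ∘ₗ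
        (TensorProduct.map εE LinearMap.id ∘ₗ δE) =
        TensorProduct.map (LinearMap.id : k →ₗ[k] k) ι ∘ₗ
          TensorProduct.mk k k ↥(LinearMap.ker Φ) 1 := by
      calc TensorProduct.map (LinearMap.id : k →ₗ[k] k) ι ∘ₗ
            (TensorProduct.map εE LinearMap.id ∘ₗ δE)
          = TensorProduct.map (LinearMap.id ∘ₗ εE) (ι ∘ₗ LinearMap.id) ∘ₗ δE := by
            rw [map_comp_map']
        _ = TensorProduct.map (Coalgebra.counit (R := k) (A := C) ∘ₗ ι) ι ∘ₗ δE := by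
            rw [LinearMap.id_comp, LinearMap.comp_id]
        _ = (TensorProduct.map (Coalgebra.counit (R := k) (A := C)) LinearMap.id ∘ₗ
              TensorProduct.map ι ι) ∘ₗ δE := by rw [map_comp_map, LinearMap.id_comp]
        _ = TensorProduct.map (Coalgebra.counit (R := k) (A := C)) LinearMap.id ∘ₗ
              (Coalgebra.comul (R := k) (A := C) ∘ₗ ι) := by rw [LinearMap.comp_assoc, hjδ]
        _ = (TensorProduct.map (Coalgebra.counit (R := k) (A := C)) LinearMap.id ∘ₗ
              Coalgebra.comul (R := k) (A := C)) ∘ₗ ι := by rw [LinearMap.comp_assoc]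
        _ = TensorProduct.mk k k C 1 ∘ₗ ι := by rw [ax]
        _ = TensorProduct.map (LinearMap.id : k →ₗ[k] k) ι ∘ₗ
              TensorProduct.mk k k ↥(LinearMap.ker Φ) 1 := by rw [hmk]
    refine LinearMap.ext fun x => hJ ?_
    have hx := LinearMap.congr_fun hJs x
    simp only [LinearMap.comp_apply] at hx ⊢
    exact hx
  have hcounitL : (εE.lTensor _) ∘ₗ δE =
      (TensorProduct.mk k ↥(LinearMap.ker Φ) k).flip 1 := by
    have hJ : Function.Injective (TensorProduct.map ι (LinearMap.id : k →ₗ[k] k)) :=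
      map_injective hι (fun a b hab => hab)
    have ax : TensorProduct.map (LinearMap.id : C →ₗ[k] C) (Coalgebra.counit (R := k) (A := C))
        ∘ₗ Coalgebra.comul (R := k) (A := C) = (TensorProduct.mk k C k).flip 1 :=
      Coalgebra.lTensor_counit_comp_comul
    have hmk : TensorProduct.map ι (LinearMap.id : k →ₗ[k] k) ∘ₗ
        (TensorProduct.mk k ↥(LinearMap.ker Φ) k).flip 1 =
        (TensorProduct.mk k C k).flip 1 ∘ₗ ι := by
      refine LinearMap.ext fun x => ?_
      simp
    have hJs : TensorProduct.map ι (LinearMap.id : k →ₗ[k] k) ∘ₗ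
        (TensorProduct.map LinearMap.id εE ∘ₗ δE) =
        TensorProduct.map ι (LinearMap.id : k →ₗ[k] k) ∘ₗ
          (TensorProduct.mk k ↥(LinearMap.ker Φ) k).flip 1 := by
      calc TensorProduct.map ι (LinearMap.id : k →ₗ[k] k) ∘ₗ
            (TensorProduct.map LinearMap.id εE ∘ₗ δE)
          = TensorProduct.map (ι ∘ₗ LinearMap.id) (LinearMap.id ∘ₗ εE) ∘ₗ δE := by
            rw [map_comp_map']
        _ = TensorProduct.map ι (Coalgebra.counit (R := k) (A := C) ∘ₗ ι) ∘ₗ δE := by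
            rw [LinearMap.id_comp, LinearMap.comp_id]
        _ = (TensorProduct.map LinearMap.id (Coalgebra.counit (R := k) (A := C)) ∘ₗ
              TensorProduct.map ι ι) ∘ₗ δE := by rw [map_comp_map, LinearMap.id_comp]
        _ = TensorProduct.map LinearMap.id (Coalgebra.counit (R := k) (A := C)) ∘ₗ
              (Coalgebra.comul (R := k) (A := C) ∘ₗ ι) := by rw [LinearMap.comp_assoc, hjδ]
        _ = (TensorProduct.map LinearMap.id (Coalgebra.counit (R := k) (A := C)) ∘ₗ
              Coalgebra.comul (R := k) (A := C)) ∘ₗ ι := by rw [LinearMap.comp_assoc]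
        _ = (TensorProduct.mk k C k).flip 1 ∘ₗ ι := by rw [ax]
        _ = TensorProduct.map ι (LinearMap.id : k →ₗ[k] k) ∘ₗ
              (TensorProduct.mk k ↥(LinearMap.ker Φ) k).flip 1 := by rw [hmk]
    refine LinearMap.ext fun x => hJ ?_
    have hx := LinearMap.congr_fun hJs x
    simp only [LinearMap.comp_apply] at hx ⊢
    exact hx
  letI instE : Coalgebra k ↥(LinearMap.ker Φ) :=
    { comul := δE
      counit := εE
      coassoc := hcoassoc
      rTensor_counit_comp_comul := hcounitR
      lTensor_counit_comp_comul := hcounitL }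
  let i : ↥(LinearMap.ker Φ) →ₗc[k] C :=
    { toLinearMap := ι
      counit_comp := rfl
      map_comp_comul := hjδ }
  have hfgE : ∀ c ∈ LinearMap.ker Φ, f' c = g' c := by
    intro c hc
    have h1 := extract_psi (k := k) f' c
    have h2 := extract_psi (k := k) g' c
    rw [hpsi_mem c hc] at h1
    exact h1.symm.trans h2
  refine ⟨instE, i, rfl, ?_, ?_⟩
  · refine CoalgHom.ext fun x => ?_
    exact hfgE (ι x) x.2
  · intro E' _ _ _ h hcomp
    have hfh : ∀ x : E', f' (h x) = g' (h x) := by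
      intro x
      have := DFunLike.congr_fun hcomp x
      exact this
    have hmemh : ∀ x : E', h x ∈ LinearMap.ker Φ := by
      intro x
      refine hpsi_mem' _ ?_
      rw [psi_comp_coalgHom_apply f' h x (Coalgebra.Repr.arbitrary k x)
        (fun i => Coalgebra.Repr.arbitrary k ((Coalgebra.Repr.arbitrary k x).left i)),
        psi_comp_coalgHom_apply g' h x (Coalgebra.Repr.arbitrary k x)
        (fun i => Coalgebra.Repr.arbitrary k ((Coalgebra.Repr.arbitrary k x).left i))]
      exact Finset.sum_congr rfl fun i _ => Finset.sum_congr rfl fun j _ => by rw [hfh]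
    set h0 : E' →ₗ[k] ↥(LinearMap.ker Φ) :=
      LinearMap.codRestrict (LinearMap.ker Φ) h.toLinearMap hmemh with hh0
    have hι0 : ι ∘ₗ h0 = h.toLinearMap := LinearMap.subtype_comp_codRestrict _ _ _
    have hmapcomul : TensorProduct.map h0 h0 ∘ₗ Coalgebra.comul (R := k) (A := E') =
        δE ∘ₗ h0 := by
      have hJs : TensorProduct.map ι ι ∘ₗ
          (TensorProduct.map h0 h0 ∘ₗ Coalgebra.comul (R := k) (A := E')) =
          TensorProduct.map ι ι ∘ₗ (δE ∘ₗ h0) := by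
        calc TensorProduct.map ι ι ∘ₗ
              (TensorProduct.map h0 h0 ∘ₗ Coalgebra.comul (R := k) (A := E'))
            = TensorProduct.map (ι ∘ₗ h0) (ι ∘ₗ h0) ∘ₗ Coalgebra.comul := by rw [map_comp_map']
          _ = TensorProduct.map h.toLinearMap h.toLinearMap ∘ₗ Coalgebra.comul := by rw [hι0]
          _ = Coalgebra.comul ∘ₗ h.toLinearMap := h.map_comp_comul
          _ = Coalgebra.comul ∘ₗ (ι ∘ₗ h0) := by rw [hι0]
          _ = (Coalgebra.comul ∘ₗ ι) ∘ₗ h0 := by rw [LinearMap.comp_assoc]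
          _ = (TensorProduct.map ι ι ∘ₗ δE) ∘ₗ h0 := by rw [hjδ]
          _ = TensorProduct.map ι ι ∘ₗ (δE ∘ₗ h0) := by rw [LinearMap.comp_assoc]
      refine LinearMap.ext fun x => hj ?_
      have hx := LinearMap.congr_fun hJs x
      simp only [LinearMap.comp_apply] at hx ⊢
      exact hx
    have hcounith : εE ∘ₗ h0 = Coalgebra.counit (R := k) (A := E') := by
      calc (Coalgebra.counit (R := k) (A := C) ∘ₗ ι) ∘ₗ h0
          = Coalgebra.counit (R := k) (A := C) ∘ₗ (ι ∘ₗ h0) := by rw [LinearMap.comp_assoc]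
        _ = Coalgebra.counit (R := k) (A := C) ∘ₗ h.toLinearMap := by rw [hι0]
        _ = Coalgebra.counit := h.counit_comp
    refine ⟨{ toLinearMap := h0, counit_comp := hcounith, map_comp_comul := hmapcomul }, ?_, ?_⟩
    · exact CoalgHom.ext fun x => rfl
    · intro h'' hh''
      refine CoalgHom.ext fun x => ?_
      refine Subtype.ext ?_
      exact DFunLike.congr_fun hh'' x
end

section
/- Let k be a field and f, g : B → A two morphisms of k-bialgebras. Set S := {b ∈ B | f(b) = g(b)} and let D be the sum of all subcoalgebras of B contained in S. Then D is a subbialgebra of B: it contains the unit of B and is closed under the multiplication of B (in addition to being a subcoalgebra). -/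
universe u v

lemma range_map_mono {k : Type u} [CommRing k] {C : Type v} [AddCommGroup C] [Module k C]
    {V W : Submodule k C} (h : V ≤ W) :
    LinearMap.range (TensorProduct.map V.subtype V.subtype) ≤
      LinearMap.range (TensorProduct.map W.subtype W.subtype) := by
  have hV : V.subtype = W.subtype ∘ₗ Submodule.inclusion h := rfl
  rw [hV, TensorProduct.map_comp]
  exact LinearMap.range_comp_le_range _ _

lemma mem_range_map_of_tmul {k : Type u} [CommRing k] {C : Type v} [AddCommGroup C] [Module k C]
    {V : Submodule k C} {a b : C} (ha : a ∈ V) (hb : b ∈ V) :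
    a ⊗ₜ[k] b ∈ LinearMap.range (TensorProduct.map V.subtype V.subtype) :=
  ⟨(⟨a, ha⟩ : V) ⊗ₜ (⟨b, hb⟩ : V), rfl⟩

lemma range_map_mul_le {k : Type u} [CommRing k] {B : Type v} [Ring B] [Algebra k B]
    (V W : Submodule k B) :
    LinearMap.range (TensorProduct.map V.subtype V.subtype) *
      LinearMap.range (TensorProduct.map W.subtype W.subtype) ≤
      LinearMap.range (TensorProduct.map (V * W).subtype (V * W).subtype) := by
  rw [TensorProduct.range_map_eq_span_tmul, TensorProduct.range_map_eq_span_tmul,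
    Submodule.span_mul_span]
  rw [Submodule.span_le]
  rintro x ⟨y, ⟨⟨m, n, rfl⟩, z, ⟨⟨m', n', rfl⟩, rfl⟩⟩⟩
  simp only [Algebra.TensorProduct.tmul_mul_tmul]
  exact mem_range_map_of_tmul
    (Submodule.mul_mem_mul m.2 m'.2) (Submodule.mul_mem_mul n.2 n'.2)

/-- Let `f, g : B → A` be bialgebra maps and let `D` be the sum of all subcoalgebras of
`B` contained in `S = {b | f b = g b}`.  Then `D` is a subbialgebra of `B`: it is a
subcoalgebra which contains the unit of `B` and is closed under multiplication. -/
theorem sum_of_subcoalgebras_is_subbialgebra {k : Type u} [Field k] {B A : Type v}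
    [Ring B] [Ring A] [Bialgebra k B] [Bialgebra k A]
    (f g : B →ₐc[k] A) (D : Submodule k B)
    (hD : D = sSup {V : Submodule k B | IsSubcoalgebra V ∧
      V ≤ LinearMap.ker (f.toCoalgHom.toLinearMap - g.toCoalgHom.toLinearMap)}) :
    IsSubcoalgebra D ∧ (1 : B) ∈ D ∧ ∀ x ∈ D, ∀ y ∈ D, x * y ∈ D := by
  set S : Set (Submodule k B) := {V : Submodule k B | IsSubcoalgebra V ∧
      V ≤ LinearMap.ker (f.toCoalgHom.toLinearMap - g.toCoalgHom.toLinearMap)} with hS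
  subst hD
  refine ⟨?_, ?_, ?_⟩
  · -- subcoalgebra
    intro v hv
    have h : sSup S ≤ Submodule.comap (Coalgebra.comul (R := k) (A := B))
        (LinearMap.range (TensorProduct.map (sSup S).subtype (sSup S).subtype)) :=
      sSup_le fun V hV x hx =>
        Submodule.mem_comap.mpr (range_map_mono (le_sSup hV) (hV.1 x hx))
    exact h hv
  · -- unit
    have h1 : Submodule.span k {(1 : B)} ∈ S := by
      constructor
      · intro v hv
        obtain ⟨r, rfl⟩ := Submodule.mem_span_singleton.mp hv
        rw [map_smul, Bialgebra.comul_one, Algebra.TensorProduct.one_def]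
        exact Submodule.smul_mem _ r
          (mem_range_map_of_tmul (Submodule.mem_span_singleton_self _)
            (Submodule.mem_span_singleton_self _))
      · intro v hv
        obtain ⟨r, rfl⟩ := Submodule.mem_span_singleton.mp hv
        rw [LinearMap.mem_ker, map_smul]
        have h0 : (f.toCoalgHom.toLinearMap - g.toCoalgHom.toLinearMap) (1 : B) = 0 := by
          rw [LinearMap.sub_apply, sub_eq_zero]
          show f 1 = g 1
          rw [map_one, map_one]
        rw [h0, smul_zero]
    exact le_sSup h1 (Submodule.mem_span_singleton_self _)
  · -- multiplication
    have key : ∀ V ∈ S, ∀ W ∈ S, V * W ∈ S := by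
      intro V hV W hW
      constructor
      · intro v hv
        refine Submodule.mul_induction_on hv (fun x hx y hy => ?_)
          (fun x y hx hy => by rw [map_add]; exact add_mem hx hy)
        rw [Bialgebra.comul_mul]
        exact range_map_mul_le V W
          (Submodule.mul_mem_mul (hV.1 x hx) (hW.1 y hy))
      · intro v hv
        refine Submodule.mul_induction_on hv (fun x hx y hy => ?_)
          (fun x y hx hy => add_mem hx hy)
        have hfx : f x = g x := by
          have := hV.2 hx; rw [LinearMap.mem_ker, LinearMap.sub_apply,
            sub_eq_zero] at this; exact this
        have hfy : f y = g y := by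
          have := hW.2 hy; rw [LinearMap.mem_ker, LinearMap.sub_apply,
            sub_eq_zero] at this; exact this
        simp only [LinearMap.mem_ker, LinearMap.sub_apply, sub_eq_zero]
        show f (x * y) = g (x * y)
        rw [map_mul, map_mul, hfx, hfy]
    have hmul : sSup S * sSup S ≤ sSup S := by
      conv_lhs => rw [sSup_eq_iSup']
      rw [Submodule.iSup_mul]
      refine iSup_le fun V => ?_
      rw [Submodule.mul_iSup]
      exact iSup_le fun W => le_sSup (key V V.2 W W.2)
    intro x hx y hy
    exact hmul (Submodule.mul_mem_mul hx hy)
end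

section
/- Let k be a field, B a k-bialgebra with multiplication m, unit η, comultiplication Δ and counit ε, and let S : B → B be a k-linear map that is both an algebra anti-homomorphism (S(xy) = S(y)S(x), S(1) = 1) and a coalgebra anti-homomorphism (Δ(S(b)) = S(b₍₂₎) ⊗ S(b₍₁₎), ε ∘ S = ε). Let H be the sum of all subcoalgebras C of B such that S(c₍₁₎)c₍₂₎ = c₍₁₎S(c₍₂₎) = ε(c)1 for all c ∈ C. Then H is a subbialgebra of B, S(H) ⊆ H, and H together with the restriction of S is a Hopf algebra over k. -/
universe u v
open TensorProduct LinearMap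

section Aux
variable {k : Type u} [Field k]

lemma tensor_map_injective {M N P Q : Type*} [AddCommGroup M] [Module k M] [AddCommGroup N]
    [Module k N] [AddCommGroup P] [Module k P] [AddCommGroup Q] [Module k Q]
    {f : M →ₗ[k] P} {g : N →ₗ[k] Q} (hf : Function.Injective f) (hg : Function.Injective g) :
    Function.Injective (TensorProduct.map f g) := by
  rw [← LinearMap.lTensor_comp_rTensor]
  exact (Module.Flat.lTensor_preserves_injective_linearMap g hg).comp
    (Module.Flat.rTensor_preserves_injective_linearMap f hf)

lemma range_map_subtype_mono {B : Type v} [AddCommGroup B] [Module k B] {V W : Submodule k B}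
    (h : V ≤ W) :
    LinearMap.range (TensorProduct.map V.subtype V.subtype) ≤
      LinearMap.range (TensorProduct.map W.subtype W.subtype) := by
  rw [TensorProduct.range_map_eq_span_tmul, TensorProduct.range_map_eq_span_tmul]
  apply Submodule.span_mono
  rintro _ ⟨m, n, rfl⟩
  exact ⟨⟨m, h m.2⟩, ⟨n, h n.2⟩, rfl⟩

lemma tmul_mem_range_map_subtype {B : Type v} [AddCommGroup B] [Module k B] {V : Submodule k B}
    {x y : B} (hx : x ∈ V) (hy : y ∈ V) :
    x ⊗ₜ[k] y ∈ LinearMap.range (TensorProduct.map V.subtype V.subtype) :=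
  ⟨⟨x, hx⟩ ⊗ₜ ⟨y, hy⟩, rfl⟩

lemma comul_repr {B : Type v} [AddCommGroup B] [Module k B] [Coalgebra k B] {V : Submodule k B}
    {v : B} (hv : Coalgebra.comul (R := k) v ∈
      LinearMap.range (TensorProduct.map V.subtype V.subtype)) :
    ∃ s : Finset (V × V), Coalgebra.comul (R := k) v = ∑ p ∈ s, (p.1 : B) ⊗ₜ[k] (p.2 : B) := by
  obtain ⟨t, ht⟩ := hv
  obtain ⟨s, rfl⟩ := TensorProduct.exists_finset t
  refine ⟨s, ?_⟩
  rw [← ht, map_sum]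
  simp

end Aux

set_option maxHeartbeats 3000000 in
/-- Let `B` be a bialgebra and `S : B → B` a `k`-linear map which is both an algebra
anti-homomorphism and a coalgebra anti-homomorphism.  Let `H` be the sum of all
subcoalgebras `C` of `B` such that `S(c₍₁₎)c₍₂₎ = c₍₁₎S(c₍₂₎) = ε(c)1` for all `c ∈ C`.
Then `H` is a subbialgebra of `B` (a subcoalgebra containing `1` and closed under
multiplication), `S(H) ⊆ H`, and `H` together with the restriction of `S` is a Hopf
algebra: there is a Hopf algebra `H'` and an injective bialgebra map `i : H' → B` with
image exactly `H` which intertwines the antipode of `H'` with `S`. -/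
theorem sum_of_antipode_subcoalgebras_is_hopf {k : Type u} [Field k] {B : Type v}
    [Ring B] [Bialgebra k B] (S : B →ₗ[k] B)
    (hSmul : ∀ x y : B, S (x * y) = S y * S x) (hSone : S 1 = 1)
    (hScomul : Coalgebra.comul (R := k) (A := B) ∘ₗ S =
      TensorProduct.map S S ∘ₗ (TensorProduct.comm k B B).toLinearMap ∘ₗ
        Coalgebra.comul (R := k) (A := B))
    (hScounit : Coalgebra.counit (R := k) (A := B) ∘ₗ S = Coalgebra.counit)
    (H : Submodule k B)
    (hH : H = sSup {V : Submodule k B | IsSubcoalgebra V ∧ ∀ c ∈ V,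
      LinearMap.mul' k B (LinearMap.rTensor B S (Coalgebra.comul (R := k) c)) =
        algebraMap k B (Coalgebra.counit (R := k) c) ∧
      LinearMap.mul' k B (LinearMap.lTensor B S (Coalgebra.comul (R := k) c)) =
        algebraMap k B (Coalgebra.counit (R := k) c)}) :
    IsSubcoalgebra H ∧ (1 : B) ∈ H ∧ (∀ x ∈ H, ∀ y ∈ H, x * y ∈ H) ∧
      (∀ x ∈ H, S x ∈ H) ∧
      ∃ (H' : Type v) (_ring : Ring H') (_hopf : HopfAlgebra k H') (i : H' →ₐc[k] B),
        Function.Injective ⇑i ∧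
        Set.range ⇑i = (H : Set B) ∧
        ∀ x : H', i (HopfAlgebra.antipode (R := k) x) = S (i x) := by
  classical
  set Pset : Set (Submodule k B) := {V : Submodule k B | IsSubcoalgebra V ∧ ∀ c ∈ V,
      LinearMap.mul' k B (LinearMap.rTensor B S (Coalgebra.comul (R := k) c)) =
        algebraMap k B (Coalgebra.counit (R := k) c) ∧
      LinearMap.mul' k B (LinearMap.lTensor B S (Coalgebra.comul (R := k) c)) =
        algebraMap k B (Coalgebra.counit (R := k) c)} with hPset
  have hbot : (⊥ : Submodule k B) ∈ Pset := by
    constructor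
    · intro v hv
      rw [Submodule.mem_bot] at hv; subst hv
      simp
    · intro c hc
      rw [Submodule.mem_bot] at hc; subst hc
      simp
  have hsup : ∀ V ∈ Pset, ∀ W ∈ Pset, V ⊔ W ∈ Pset := by
    intro V hV W hW
    constructor
    · intro x hx
      rcases Submodule.mem_sup.1 hx with ⟨u, hu, v, hv, rfl⟩
      rw [map_add]
      exact add_mem (range_map_subtype_mono le_sup_left (hV.1 u hu))
        (range_map_subtype_mono le_sup_right (hW.1 v hv))
    · intro c hc
      rcases Submodule.mem_sup.1 hc with ⟨u, hu, v, hv, rfl⟩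
      constructor
      · rw [map_add, map_add, map_add, map_add, (hV.2 u hu).1, (hW.2 v hv).1, ← map_add]
      · rw [map_add, map_add, map_add, map_add, (hV.2 u hu).2, (hW.2 v hv).2, ← map_add]
  have hdir : DirectedOn (· ≤ ·) Pset :=
    fun V hV W hW => ⟨V ⊔ W, hsup V hV W hW, le_sup_left, le_sup_right⟩
  have hmem : ∀ x : B, x ∈ H ↔ ∃ V ∈ Pset, x ∈ V := by
    intro x; rw [hH]
    exact Submodule.mem_sSup_of_directed ⟨⊥, hbot⟩ hdir
  have hle : ∀ V ∈ Pset, V ≤ H := fun V hV => hH ▸ le_sSup hV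
  have hHsub : IsSubcoalgebra H := by
    intro v hv
    obtain ⟨V, hV, hvV⟩ := (hmem v).1 hv
    exact range_map_subtype_mono (hle V hV) (hV.1 v hvV)
  have hHcond : ∀ c ∈ H,
      LinearMap.mul' k B (LinearMap.rTensor B S (Coalgebra.comul (R := k) c)) =
        algebraMap k B (Coalgebra.counit (R := k) c) ∧
      LinearMap.mul' k B (LinearMap.lTensor B S (Coalgebra.comul (R := k) c)) =
        algebraMap k B (Coalgebra.counit (R := k) c) := by
    intro c hc
    obtain ⟨V, hV, hcV⟩ := (hmem c).1 hc
    exact hV.2 c hcV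
  -- 1 ∈ H
  have honeP : Submodule.span k {(1 : B)} ∈ Pset := by
    constructor
    · intro v hv
      rw [Submodule.mem_span_singleton] at hv
      obtain ⟨a, rfl⟩ := hv
      rw [map_smul]
      refine Submodule.smul_mem _ a ?_
      rw [Bialgebra.comul_one, Algebra.TensorProduct.one_def]
      exact tmul_mem_range_map_subtype (Submodule.mem_span_singleton_self 1)
        (Submodule.mem_span_singleton_self 1)
    · intro c hc
      rw [Submodule.mem_span_singleton] at hc
      obtain ⟨a, rfl⟩ := hc
      constructor <;>
      simp [Bialgebra.comul_one, Algebra.TensorProduct.one_def, hSone,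
        Algebra.algebraMap_eq_smul_one]
  have h1H : (1 : B) ∈ H := hle _ honeP (Submodule.mem_span_singleton_self 1)
  -- closure under multiplication
  have key1 : ∀ a b c d : B, S (a * c) * (b * d) = S c * ((S a * b) * d) := by
    intro a b c d
    simp [hSmul, mul_assoc]
  have key2 : ∀ a b c d : B, (a * c) * S (b * d) = a * ((c * S d) * S b) := by
    intro a b c d
    simp [hSmul, mul_assoc]
  have hmulP : ∀ V ∈ Pset, ∀ W ∈ Pset, V * W ∈ Pset := by
    intro V hV W hW
    constructor
    · intro x hx
      refine Submodule.mul_induction_on hx ?_ ?_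
      · intro v hv w hw
        obtain ⟨s, hs⟩ := comul_repr (hV.1 v hv)
        obtain ⟨t, ht⟩ := comul_repr (hW.1 w hw)
        rw [Bialgebra.comul_mul, hs, ht, Finset.sum_mul_sum]
        refine Submodule.sum_mem _ fun p hp => Submodule.sum_mem _ fun q hq => ?_
        rw [Algebra.TensorProduct.tmul_mul_tmul]
        exact tmul_mem_range_map_subtype (Submodule.mul_mem_mul p.1.2 q.1.2)
          (Submodule.mul_mem_mul p.2.2 q.2.2)
      · intro x y hx hy
        rw [map_add]; exact add_mem hx hy
    · intro c hc
      refine Submodule.mul_induction_on hc ?_ ?_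
      · intro v hv w hw
        obtain ⟨s, hs⟩ := comul_repr (hV.1 v hv)
        obtain ⟨t, ht⟩ := comul_repr (hW.1 w hw)
        have hv1 : ∑ p ∈ s, S (p.1 : B) * (p.2 : B) = algebraMap k B (Coalgebra.counit (R := k) v) := by
          have h := (hV.2 v hv).1
          rw [hs] at h
          simpa [map_sum] using h
        have hv2 : ∑ p ∈ s, (p.1 : B) * S (p.2 : B) = algebraMap k B (Coalgebra.counit (R := k) v) := by
          have h := (hV.2 v hv).2
          rw [hs] at h
          simpa [map_sum] using h
        have hw1 : ∑ q ∈ t, S (q.1 : B) * (q.2 : B) = algebraMap k B (Coalgebra.counit (R := k) w) := by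
          have h := (hW.2 w hw).1
          rw [ht] at h
          simpa [map_sum] using h
        have hw2 : ∑ q ∈ t, (q.1 : B) * S (q.2 : B) = algebraMap k B (Coalgebra.counit (R := k) w) := by
          have h := (hW.2 w hw).2
          rw [ht] at h
          simpa [map_sum] using h
        constructor
        · rw [Bialgebra.comul_mul, hs, ht, Finset.sum_mul_sum]
          simp only [Algebra.TensorProduct.tmul_mul_tmul, map_sum, LinearMap.rTensor_tmul,
            LinearMap.mul'_apply]
          calc ∑ p ∈ s, ∑ q ∈ t, S ((p.1 : B) * (q.1 : B)) * ((p.2 : B) * (q.2 : B))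
              = ∑ q ∈ t, ∑ p ∈ s, S (q.1 : B) * ((S (p.1 : B) * (p.2 : B)) * (q.2 : B)) := by
                rw [Finset.sum_comm]
                exact Finset.sum_congr rfl fun q _ => Finset.sum_congr rfl fun p _ => key1 _ _ _ _
            _ = ∑ q ∈ t, S (q.1 : B) * ((∑ p ∈ s, S (p.1 : B) * (p.2 : B)) * (q.2 : B)) := by
                simp [Finset.mul_sum, Finset.sum_mul]
            _ = algebraMap k B (Coalgebra.counit (R := k) (v * w)) := by
                rw [hv1]
                simp_rw [← Algebra.smul_def, mul_smul_comm]
                rw [← Finset.smul_sum, hw1, Algebra.smul_def, ← map_mul, Bialgebra.counit_mul]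
        · rw [Bialgebra.comul_mul, hs, ht, Finset.sum_mul_sum]
          simp only [Algebra.TensorProduct.tmul_mul_tmul, map_sum, LinearMap.lTensor_tmul,
            LinearMap.mul'_apply]
          calc ∑ p ∈ s, ∑ q ∈ t, ((p.1 : B) * (q.1 : B)) * S ((p.2 : B) * (q.2 : B))
              = ∑ p ∈ s, ∑ q ∈ t, (p.1 : B) * (((q.1 : B) * S (q.2 : B)) * S (p.2 : B)) := by
                exact Finset.sum_congr rfl fun p _ => Finset.sum_congr rfl fun q _ => key2 _ _ _ _
            _ = ∑ p ∈ s, (p.1 : B) * ((∑ q ∈ t, (q.1 : B) * S (q.2 : B)) * S (p.2 : B)) := by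
                simp [Finset.mul_sum, Finset.sum_mul]
            _ = algebraMap k B (Coalgebra.counit (R := k) (v * w)) := by
                rw [hw2]
                simp_rw [← Algebra.smul_def, mul_smul_comm]
                rw [← Finset.smul_sum, hv2, Algebra.smul_def, ← map_mul, Bialgebra.counit_mul,
                  mul_comm (Coalgebra.counit (R := k) v)]
      · intro x y hx hy
        refine ⟨?_, ?_⟩ <;> simp [map_add, hx.1, hx.2, hy.1, hy.2]
  have hmulH : ∀ x ∈ H, ∀ y ∈ H, x * y ∈ H := by
    intro x hx y hy
    obtain ⟨V, hV, hxV⟩ := (hmem x).1 hx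
    obtain ⟨W, hW, hyW⟩ := (hmem y).1 hy
    exact hle _ (hmulP V hV W hW) (Submodule.mul_mem_mul hxV hyW)
  -- stability under S
  have hcomulS : ∀ v : B, Coalgebra.comul (R := k) (S v) =
      TensorProduct.map S S ((TensorProduct.comm k B B) (Coalgebra.comul (R := k) v)) :=
    fun v => LinearMap.congr_fun hScomul v
  have hcounitS : ∀ v : B, Coalgebra.counit (R := k) (S v) = Coalgebra.counit (R := k) v :=
    fun v => LinearMap.congr_fun hScounit v
  have hSP : ∀ V ∈ Pset, V.map S ∈ Pset := by
    intro V hV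
    constructor
    · rintro _ ⟨v, hv, rfl⟩
      obtain ⟨s, hs⟩ := comul_repr (hV.1 v hv)
      rw [hcomulS, hs, map_sum, map_sum]
      refine Submodule.sum_mem _ fun p hp => ?_
      simp only [TensorProduct.comm_tmul, TensorProduct.map_tmul]
      exact tmul_mem_range_map_subtype (Submodule.mem_map_of_mem p.2.2)
        (Submodule.mem_map_of_mem p.1.2)
    · rintro _ ⟨v, hv, rfl⟩
      obtain ⟨s, hs⟩ := comul_repr (hV.1 v hv)
      have hv1 : ∑ p ∈ s, S (p.1 : B) * (p.2 : B) = algebraMap k B (Coalgebra.counit (R := k) v) := by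
        have h := (hV.2 v hv).1
        rw [hs] at h
        simpa [map_sum] using h
      have hv2 : ∑ p ∈ s, (p.1 : B) * S (p.2 : B) = algebraMap k B (Coalgebra.counit (R := k) v) := by
        have h := (hV.2 v hv).2
        rw [hs] at h
        simpa [map_sum] using h
      have halg : S (algebraMap k B (Coalgebra.counit (R := k) v)) =
          algebraMap k B (Coalgebra.counit (R := k) v) := by
        rw [Algebra.algebraMap_eq_smul_one, map_smul, hSone]
      constructor
      · rw [hcomulS, hs]
        simp only [map_sum, TensorProduct.comm_tmul, TensorProduct.map_tmul,
          LinearMap.rTensor_tmul, LinearMap.mul'_apply]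
        have e : ∀ p : V × V, S (S (p.2 : B)) * S (p.1 : B) = S ((p.1 : B) * S (p.2 : B)) :=
          fun p => (hSmul _ _).symm
        rw [Finset.sum_congr rfl fun p _ => e p, ← map_sum, hv2, halg, hcounitS]
      · rw [hcomulS, hs]
        simp only [map_sum, TensorProduct.comm_tmul, TensorProduct.map_tmul,
          LinearMap.lTensor_tmul, LinearMap.mul'_apply]
        have e : ∀ p : V × V, S (p.2 : B) * S (S (p.1 : B)) = S (S (p.1 : B) * (p.2 : B)) :=
          fun p => (hSmul _ _).symm
        rw [Finset.sum_congr rfl fun p _ => e p, ← map_sum, hv1, halg, hcounitS]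
  have hSH : ∀ x ∈ H, S x ∈ H := by
    intro x hx
    obtain ⟨V, hV, hxV⟩ := (hmem x).1 hx
    exact hle _ (hSP V hV) (Submodule.mem_map_of_mem hxV)
  -- the construction of the Hopf algebra structure
  let A : Subalgebra k B := H.toSubalgebra h1H (fun x y hx hy => hmulH x hx y hy)
  let ι : ↥A →ₗ[k] B := A.val.toLinearMap
  have hιinj : Function.Injective ι := Subtype.val_injective
  have hmem' : ∀ x : ↥A, (ι x) ∈ H := fun x => x.2
  have hinj2 : Function.Injective (TensorProduct.map ι ι) := tensor_map_injective hιinj hιinj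
  have hrange : ∀ x : ↥A, Coalgebra.comul (R := k) (ι x) ∈
      LinearMap.range (TensorProduct.map ι ι) := fun x => hHsub (ι x) (hmem' x)
  let Rng : Submodule k (B ⊗[k] B) := LinearMap.range (TensorProduct.map ι ι)
  let δ : ↥A →ₗ[k] ↥A ⊗[k] ↥A :=
    ((LinearEquiv.ofInjective (TensorProduct.map ι ι) hinj2).symm : Rng →ₗ[k] ↥A ⊗[k] ↥A) ∘ₗ
      LinearMap.codRestrict Rng (Coalgebra.comul (R := k) ∘ₗ ι) hrange
  have hδ : ∀ x : ↥A, TensorProduct.map ι ι (δ x) = Coalgebra.comul (R := k) (ι x) := by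
    intro x
    show TensorProduct.map ι ι
      ((LinearEquiv.ofInjective (TensorProduct.map ι ι) hinj2).symm
        (LinearMap.codRestrict Rng (Coalgebra.comul (R := k) ∘ₗ ι) hrange x)) = _
    rw [← LinearEquiv.ofInjective_apply (TensorProduct.map ι ι) (h := hinj2),
      LinearEquiv.apply_symm_apply]
    rfl
  have hδ' : TensorProduct.map ι ι ∘ₗ δ = Coalgebra.comul (R := k) ∘ₗ ι := LinearMap.ext hδ
  let εH : ↥A →ₗ[k] k := Coalgebra.counit (R := k) ∘ₗ ι
  have hinj3 : Function.Injective (TensorProduct.map ι (TensorProduct.map ι ι)) :=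
    tensor_map_injective hιinj hinj2
  have hι1 : ι (1 : ↥A) = 1 := A.val.map_one
  have hιmul : ∀ a b : ↥A, ι (a * b) = ι a * ι b := fun a b => A.val.map_mul a b
  have hmapone : TensorProduct.map ι ι (1 : ↥A ⊗[k] ↥A) = 1 := by
    simp [Algebra.TensorProduct.one_def, hι1]
  have hmapmul : ∀ t u : ↥A ⊗[k] ↥A, TensorProduct.map ι ι (t * u) =
      TensorProduct.map ι ι t * TensorProduct.map ι ι u := by
    intro t u
    induction t using TensorProduct.induction_on with
    | zero => simp
    | tmul a b =>
      induction u using TensorProduct.induction_on with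
      | zero => simp
      | tmul c d => simp [Algebra.TensorProduct.tmul_mul_tmul, hιmul]
      | add u1 u2 h1 h2 => simp [mul_add, h1, h2]
    | add t1 t2 h1 h2 => simp [add_mul, h1, h2]
  letI coalg : Coalgebra k ↥A :=
  { comul := δ
    counit := εH
    coassoc := by
      have e1 : ∀ t : ↥A ⊗[k] ↥A, TensorProduct.map ι (TensorProduct.map ι ι) (δ.lTensor ↥A t) =
          (Coalgebra.comul (R := k) (A := B)).lTensor B (TensorProduct.map ι ι t) := fun t => by
        exact LinearMap.congr_fun (TensorProduct.ext'
          (g := TensorProduct.map ι (TensorProduct.map ι ι) ∘ₗ δ.lTensor ↥A)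
          (h := (Coalgebra.comul (R := k) (A := B)).lTensor B ∘ₗ TensorProduct.map ι ι)
          fun a b => by simp [hδ]) t
      have e2 : ∀ t : ↥A ⊗[k] ↥A, TensorProduct.map (TensorProduct.map ι ι) ι (δ.rTensor ↥A t) =
          (Coalgebra.comul (R := k) (A := B)).rTensor B (TensorProduct.map ι ι t) := fun t => by
        exact LinearMap.congr_fun (TensorProduct.ext'
          (g := TensorProduct.map (TensorProduct.map ι ι) ι ∘ₗ δ.rTensor ↥A)
          (h := (Coalgebra.comul (R := k) (A := B)).rTensor B ∘ₗ TensorProduct.map ι ι)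
          fun a b => by simp [hδ]) t
      refine LinearMap.ext fun x => hinj3 ?_
      simp only [LinearMap.comp_apply, LinearEquiv.coe_coe]
      rw [TensorProduct.map_map_assoc, e2 (δ x), hδ, Coalgebra.coassoc_apply, e1 (δ x), hδ]
    rTensor_counit_comp_comul := by
      have hk : Function.Injective (ι.lTensor k) :=
        Module.Flat.lTensor_preserves_injective_linearMap ι hιinj
      have e : ∀ t : ↥A ⊗[k] ↥A, ι.lTensor k (εH.rTensor ↥A t) =
          (Coalgebra.counit (R := k) (A := B)).rTensor B (TensorProduct.map ι ι t) := fun t => by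
        exact LinearMap.congr_fun (TensorProduct.ext'
          (g := ι.lTensor k ∘ₗ εH.rTensor ↥A)
          (h := (Coalgebra.counit (R := k) (A := B)).rTensor B ∘ₗ TensorProduct.map ι ι)
          fun a b => rfl) t
      refine LinearMap.ext fun x => hk ?_
      simp only [LinearMap.comp_apply]
      rw [e (δ x), hδ, Coalgebra.rTensor_counit_comul]
      rfl
    lTensor_counit_comp_comul := by
      have hk : Function.Injective (ι.rTensor k) :=
        Module.Flat.rTensor_preserves_injective_linearMap ι hιinj
      have e : ∀ t : ↥A ⊗[k] ↥A, ι.rTensor k (εH.lTensor ↥A t) =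
          (Coalgebra.counit (R := k) (A := B)).lTensor B (TensorProduct.map ι ι t) := fun t => by
        exact LinearMap.congr_fun (TensorProduct.ext'
          (g := ι.rTensor k ∘ₗ εH.lTensor ↥A)
          (h := (Coalgebra.counit (R := k) (A := B)).lTensor B ∘ₗ TensorProduct.map ι ι)
          fun a b => rfl) t
      refine LinearMap.ext fun x => hk ?_
      simp only [LinearMap.comp_apply]
      rw [e (δ x), hδ, Coalgebra.lTensor_counit_comul]
      rfl }
  letI bialg : Bialgebra k ↥A := Bialgebra.mk' k ↥A
    (by show Coalgebra.counit (R := k) (A := B) (ι 1) = 1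
        rw [hι1, Bialgebra.counit_one])
    (by intro a b
        show Coalgebra.counit (R := k) (A := B) (ι (a * b)) =
          Coalgebra.counit (R := k) (A := B) (ι a) * Coalgebra.counit (R := k) (A := B) (ι b)
        rw [hιmul, Bialgebra.counit_mul])
    (by apply hinj2
        show TensorProduct.map ι ι (δ 1) = TensorProduct.map ι ι 1
        rw [hδ, hmapone, hι1, Bialgebra.comul_one])
    (by intro a b
        apply hinj2
        show TensorProduct.map ι ι (δ (a * b)) = TensorProduct.map ι ι (δ a * δ b)
        rw [hδ, hmapmul, hδ, hδ, hιmul, Bialgebra.comul_mul])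
  let T : ↥A →ₗ[k] ↥A := LinearMap.codRestrict H (S ∘ₗ ι) (fun x => hSH _ (hmem' x))
  have hT : ∀ x : ↥A, ι (T x) = S (ι x) := fun x => rfl
  letI hopf : HopfAlgebra k ↥A :=
  { bialg with
    antipode := T
    mul_antipode_rTensor_comul := by
      have e : ∀ t : ↥A ⊗[k] ↥A, ι (LinearMap.mul' k ↥A t) =
          LinearMap.mul' k B (TensorProduct.map ι ι t) := fun t => by
        exact LinearMap.congr_fun (TensorProduct.ext'
          (g := ι ∘ₗ LinearMap.mul' k ↥A)
          (h := LinearMap.mul' k B ∘ₗ TensorProduct.map ι ι)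
          fun a b => by simp [LinearMap.mul'_apply, hιmul]) t
      have e2 : ∀ t : ↥A ⊗[k] ↥A, TensorProduct.map ι ι (T.rTensor ↥A t) =
          S.rTensor B (TensorProduct.map ι ι t) := fun t => by
        exact LinearMap.congr_fun (TensorProduct.ext'
          (g := TensorProduct.map ι ι ∘ₗ T.rTensor ↥A)
          (h := S.rTensor B ∘ₗ TensorProduct.map ι ι)
          fun a b => by simp [hT]) t
      refine LinearMap.ext fun x => hιinj ?_
      show ι (LinearMap.mul' k ↥A (T.rTensor ↥A (δ x))) = ι ((Algebra.linearMap k ↥A) (εH x))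
      rw [e, e2, hδ, (hHcond (ι x) (hmem' x)).1]
      exact (A.val.commutes _).symm
    mul_antipode_lTensor_comul := by
      have e : ∀ t : ↥A ⊗[k] ↥A, ι (LinearMap.mul' k ↥A t) =
          LinearMap.mul' k B (TensorProduct.map ι ι t) := fun t => by
        exact LinearMap.congr_fun (TensorProduct.ext'
          (g := ι ∘ₗ LinearMap.mul' k ↥A)
          (h := LinearMap.mul' k B ∘ₗ TensorProduct.map ι ι)
          fun a b => by simp [LinearMap.mul'_apply, hιmul]) t
      have e2 : ∀ t : ↥A ⊗[k] ↥A, TensorProduct.map ι ι (T.lTensor ↥A t) =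
          S.lTensor B (TensorProduct.map ι ι t) := fun t => by
        exact LinearMap.congr_fun (TensorProduct.ext'
          (g := TensorProduct.map ι ι ∘ₗ T.lTensor ↥A)
          (h := S.lTensor B ∘ₗ TensorProduct.map ι ι)
          fun a b => by simp [hT]) t
      refine LinearMap.ext fun x => hιinj ?_
      show ι (LinearMap.mul' k ↥A (T.lTensor ↥A (δ x))) = ι ((Algebra.linearMap k ↥A) (εH x))
      rw [e, e2, hδ, (hHcond (ι x) (hmem' x)).2]
      exact (A.val.commutes _).symm }
  let cH : ↥A →ₗc[k] B := { ι with counit_comp := rfl, map_comp_comul := hδ' }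
  let i : ↥A →ₐc[k] B := { cH with map_one' := rfl, map_mul' := fun x y => rfl }
  refine ⟨hHsub, h1H, hmulH, hSH, ↥A, inferInstance, hopf, i, hιinj, ?_, fun x => rfl⟩
  ext b
  constructor
  · rintro ⟨x, rfl⟩
    exact x.2
  · intro hb
    exact ⟨⟨b, hb⟩, rfl⟩
end
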